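/- arXiv:1804.07231 — 12 statements merged into one kernel-verified Lean document; each statement's English description precedes it below -/
import Mathlib

section
/- If S ⊆ A × B is a shuffling relation between linear orders (A,<_A) and (B,<_B), then both (A,<_A) and (B,<_B) are dense linear orders. -/
/-- A shuffling relation between linear orders `A` and `B`: a nonempty relation such that
the fibers `S(A,b)` form a strictly increasing family of initial segments of `A`, none of
which has a supremum in `A`, and the fibers `S(a,B)` form a strictly decreasing family of
final segments of `B`. -/
def IsShuffling {A B : Type*} [LinearOrder A] [LinearOrder B] (S : A → B → Prop) : Prop :=
  (∃ (a : A) (b : B), S a b) ∧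
  (∀ (b : B) (x : A), S x b → ∀ y : A, y ≤ x → S y b) ∧
  (∀ b b' : B, b < b' → {x : A | S x b} ⊂ {x : A | S x b'}) ∧
  (∀ b : B, ¬ ∃ a : A, IsLUB {x : A | S x b} a) ∧
  (∀ (a : A) (y : B), S a y → ∀ y' : B, y ≤ y' → S a y') ∧
  (∀ a a' : A, a < a' → {y : B | S a' y} ⊂ {y : B | S a y})

theorem stmt_3 {A B : Type*} [LinearOrder A] [LinearOrder B] (S : A → B → Prop)
    (hS : IsShuffling S) :
    (∀ a a' : A, a < a' → ∃ c : A, a < c ∧ c < a') ∧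
    (∀ b b' : B, b < b' → ∃ c : B, b < c ∧ c < b') := by
  obtain ⟨-, hinit, hinc, hnolub, hfin, hdec⟩ := hS
  constructor
  · intro a a' haa
    -- pick b with S a b, ¬ S a' b
    obtain ⟨hsub, hne⟩ := hdec a a' haa
    have : ∃ b, S a b ∧ ¬ S a' b := by
      by_contra h
      push_neg at h
      exact hne (Set.Subset.antisymm hsub (fun y hy => h y hy)).symm.subset
    obtain ⟨b, hab, ha'b⟩ := this
    -- a' is an upper bound of the fiber
    have hub : a' ∈ upperBounds {x : A | S x b} := by
      intro x hx
      by_contra h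
      exact ha'b (hinit b x hx a' (le_of_not_ge h))
    have hnl : ¬ IsLUB {x : A | S x b} a' := fun h => hnolub b ⟨a', h⟩
    have : ∃ u ∈ upperBounds {x : A | S x b}, u < a' := by
      by_contra h
      push_neg at h
      exact hnl ⟨hub, fun u hu => h u hu⟩
    obtain ⟨u, huub, hua⟩ := this
    refine ⟨u, ?_, hua⟩
    rcases lt_or_ge a u with h | h
    · exact h
    · exfalso
      have hmax : IsGreatest {x : A | S x b} a :=
        ⟨hab, fun x hx => le_trans (huub hx) h⟩
      exact hnolub b ⟨a, hmax.isLUB⟩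
  · intro b b' hbb
    obtain ⟨hsub, hne⟩ := hinc b b' hbb
    have : ∃ a', S a' b' ∧ ¬ S a' b := by
      by_contra h
      push_neg at h
      exact hne (Set.Subset.antisymm hsub (fun y hy => h y hy)).symm.subset
    obtain ⟨a', ha'b', ha'b⟩ := this
    -- a' is not the greatest element of fiber(b'), so get a'' > a' in it
    have : ∃ a'', S a'' b' ∧ a' < a'' := by
      by_contra h
      push_neg at h
      have hmax : IsGreatest {x : A | S x b'} a' :=
        ⟨ha'b', fun x hx => h x hx⟩
      exact hnolub b' ⟨a', hmax.isLUB⟩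
    obtain ⟨a'', ha''b', ha'a''⟩ := this
    obtain ⟨hsub2, hne2⟩ := hdec a' a'' ha'a''
    have : ∃ c, S a' c ∧ ¬ S a'' c := by
      by_contra h
      push_neg at h
      exact hne2 (Set.Subset.antisymm hsub2 (fun y hy => h y hy)).symm.subset
    obtain ⟨c, ha'c, ha''c⟩ := this
    refine ⟨c, ?_, ?_⟩
    · by_contra h
      exact ha'b (hfin a' c ha'c b (le_of_not_gt h))
    · by_contra h
      exact ha''c (hfin a'' b' ha''b' c (le_of_not_gt h))
end

section
/- If S ⊆ A × B is a shuffling relation between linear orders (A,<_A) and (B,<_B), then for every a ∈ A the fiber S(a,B) = {y ∈ B | (a,y) ∈ S} has no infimum in B. -/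
theorem stmt_4 {A B : Type*} [LinearOrder A] [LinearOrder B] (S : A → B → Prop)
    (hS : IsShuffling S) :
    ∀ a : A, ¬ ∃ m : B, IsGLB {y : B | S a y} m := by
  obtain ⟨-, hinit, -, hnosup, hfin, hdec⟩ := hS
  rintro a ⟨m, hm⟩
  have hub : a ∈ upperBounds {x | S x m} := by
    intro x hx
    by_contra hxa
    rw [not_le] at hxa
    obtain ⟨y, hay, hxy⟩ := Set.exists_of_ssubset (hdec a x hxa)
    exact hxy (hfin x m hx y (hm.1 hay))
  by_cases ham : S a m
  · exact hnosup m ⟨a, hub, fun v hv => hv ham⟩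
  · have L : ∀ y : B, ¬ S a y → y ≤ m := by
      intro y hy
      refine hm.2 (fun y' hy' => ?_)
      by_contra h
      rw [not_le] at h
      exact hy (hfin a y' hy' y h.le)
    have hnl : ¬ IsLUB {x | S x m} a := fun h => hnosup m ⟨a, h⟩
    have hex : ∃ u ∈ upperBounds {x | S x m}, u < a := by
      by_contra h
      push_neg at h
      exact hnl ⟨hub, fun u hu => h u hu⟩
    obtain ⟨u, hu, hua⟩ := hex
    obtain ⟨y, huy, hay⟩ := Set.exists_of_ssubset (hdec u a hua)
    exact hnosup m ⟨u, hu, fun v hv => hv (hfin u y huy m (L y hay))⟩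
end

section
/- Suppose S ⊆ A × B is a shuffling relation between linear orders (A,<_A) and (B,<_B). Define π_A : A → 𝔇(A) by π_A(a) = {x ∈ A | x <_A a} and π_B : B → 𝔇(A) by π_B(b) = S(A,b). Then π_A and π_B are order embeddings of (A,<_A) and (B,<_B) respectively into the Dedekind completion (𝔇(A),⊂). -/
/-- An open initial segment of a linear order: a downward closed set with no greatest
element.  The collection of all such sets, ordered by inclusion, is the Dedekind
completion `𝔇(A)`. -/
def OpenInitial {A : Type*} [LinearOrder A] (I : Set A) : Prop :=
  (∀ x ∈ I, ∀ y, y ≤ x → y ∈ I) ∧ ∀ x ∈ I, ∃ y ∈ I, x < y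

/-- Density of `A`, derived from the shuffling axioms: no fiber has a LUB. -/
lemma shuffling_dense {A B : Type*} [LinearOrder A] [LinearOrder B] (S : A → B → Prop)
    (hS : IsShuffling S) : ∀ x a : A, x < a → ∃ y : A, x < y ∧ y < a := by
  obtain ⟨-, hdown, -, hnolub, -, hdec⟩ := hS
  intro x a hxa
  by_contra h
  push_neg at h
  obtain ⟨b, hxb, hab⟩ := Set.exists_of_ssubset (hdec x a hxa)
  apply hnolub b
  refine ⟨x, ?_, ?_⟩
  · intro z hz
    by_contra hzx
    push_neg at hzx
    have haz : a ≤ z := h z hzx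
    exact hab (hdown b z hz a haz)
  · intro z hz
    exact hz hxb

theorem stmt_6 {A B : Type*} [LinearOrder A] [LinearOrder B] (S : A → B → Prop)
    (hS : IsShuffling S) :
    -- π_A and π_B map into 𝔇(A)
    (∀ a : A, OpenInitial {x : A | x < a}) ∧
    (∀ b : B, OpenInitial {x : A | S x b}) ∧
    -- π_A is an order embedding of (A,<) into (𝔇(A),⊂)
    (∀ a a' : A, a < a' ↔ {x : A | x < a} ⊂ {x : A | x < a'}) ∧
    -- π_B is an order embedding of (B,<) into (𝔇(A),⊂)
    (∀ b b' : B, b < b' ↔ {x : A | S x b} ⊂ {x : A | S x b'}) := by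
  have hdense := shuffling_dense S hS
  obtain ⟨-, hdown, hinc, hnolub, -, hdec⟩ := hS
  refine ⟨?_, ?_, ?_, ?_⟩
  · intro a
    refine ⟨fun x hx y hy => lt_of_le_of_lt hy hx, fun x hx => ?_⟩
    obtain ⟨y, h1, h2⟩ := hdense x a hx
    exact ⟨y, h2, h1⟩
  · intro b
    refine ⟨fun x hx y hy => hdown b x hx y hy, fun x hx => ?_⟩
    by_contra h
    push_neg at h
    apply hnolub b
    exact ⟨x, fun z hz => h z hz, fun z hz => hz hx⟩
  · intro a a'
    constructor
    · intro h
      refine ⟨fun x hx => lt_trans hx h, fun hsub => lt_irrefl a (hsub h)⟩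
    · intro h
      by_contra hle
      push_neg at hle
      exact h.2 fun x hx => lt_of_lt_of_le hx hle
  · intro b b'
    constructor
    · exact hinc b b'
    · intro h
      by_contra hle
      push_neg at hle
      rcases lt_or_eq_of_le hle with h1 | h1
      · exact (hinc b' b h1).2 h.1
      · exact h.2 (h1 ▸ le_refl _)
end

section
/- Suppose S ⊆ A × B is a shuffling relation between linear orders (A,<_A) and (B,<_B), and let π_A(a) = {x ∈ A | x <_A a} and π_B(b) = S(A,b) be the canonical embeddings into 𝔇(A). Then the images π_A(A) and π_B(B) are disjoint subsets of 𝔇(A), and each is topologically dense in 𝔇(A) (between any two distinct elements of 𝔇(A) there is an element of π_A(A), and also an element of π_B(B)). -/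
theorem stmt_7 {A B : Type*} [LinearOrder A] [LinearOrder B] (S : A → B → Prop)
    (hS : IsShuffling S) :
    -- the images of π_A and π_B are disjoint
    (∀ (a : A) (b : B), {x : A | x < a} ≠ {x : A | S x b}) ∧
    -- each image is topologically dense in 𝔇(A)
    (∀ I J : Set A, OpenInitial I → OpenInitial J → I ⊂ J →
      (∃ a : A, I ⊂ {x : A | x < a} ∧ {x : A | x < a} ⊂ J) ∧
      (∃ b : B, I ⊂ {x : A | S x b} ∧ {x : A | S x b} ⊂ J)) := by
  obtain ⟨-, hdc, -, hnolub, -, hdec⟩ := hS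
  constructor
  · intro a b heq
    apply hnolub b
    -- {x | x < a} always has a LUB
    rw [← heq]
    by_cases h : ∃ c, c < a ∧ c ∈ upperBounds {x : A | x < a}
    · obtain ⟨c, hca, hub⟩ := h
      exact ⟨c, hub, fun u hu => hu hca⟩
    · push_neg at h
      refine ⟨a, fun x hx => le_of_lt hx, fun u hu => ?_⟩
      by_contra hua
      exact absurd (hu) (h u (lt_of_not_ge hua))
  · intro I J hI hJ hIJ
    obtain ⟨z, hzJ, hzI⟩ := Set.exists_of_ssubset hIJ
    obtain ⟨w, hwJ, hzw⟩ := hJ.2 z hzJ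
    have hwI : w ∉ I := fun hw => hzI (hI.1 w hw z (le_of_lt hzw))
    have hsubI : ∀ x ∈ I, x < z := by
      intro x hx
      by_contra hxz
      exact hzI (hI.1 x hx z (le_of_not_gt hxz))
    constructor
    · refine ⟨w, ⟨fun x hx => lt_trans (hsubI x hx) hzw, fun hsub => hzI (hsub hzw)⟩,
        ⟨fun x hx => hJ.1 w hwJ x (le_of_lt hx), fun hsub => lt_irrefl w (hsub hwJ)⟩⟩
    · obtain ⟨b, hzb, hwb⟩ := Set.exists_of_ssubset (hdec z w hzw)
      refine ⟨b, ⟨fun x hx => hdc b z hzb x (le_of_lt (hsubI x hx)),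
        fun hsub => hzI (hsub hzb)⟩, ⟨?_, fun hsub => hwb (hsub hwJ)⟩⟩
      intro x hx
      have hxw : x < w := by
        by_contra hxw
        exact hwb (hdc b x hx w (le_of_not_gt hxw))
      exact hJ.1 w hwJ x (le_of_lt hxw)
end

section
/- Suppose S ⊆ A × B is a shuffling relation between linear orders (A,<_A) and (B,<_B), with canonical embeddings π_A(a) = {x ∈ A | x <_A a} and π_B(b) = S(A,b) into 𝔇(A). Then for all a ∈ A and b ∈ B: π_A(a) ⊊ π_B(b) if and only if (a,b) ∈ S. -/
theorem stmt_9 {A B : Type*} [LinearOrder A] [LinearOrder B] (S : A → B → Prop)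
    (hS : IsShuffling S) :
    ∀ (a : A) (b : B), {x : A | x < a} ⊂ {x : A | S x b} ↔ S a b := by
  obtain ⟨-, hdown, -, -, -, -⟩ := hS
  intro a b
  constructor
  · rintro ⟨hsub, hne⟩
    obtain ⟨x, hx, hxa⟩ := Set.not_subset.mp hne
    exact hdown b x hx a (le_of_not_gt hxa)
  · intro hab
    refine ⟨fun x hx => hdown b a hab x (le_of_lt hx), fun h => ?_⟩
    exact lt_irrefl a (h hab)
end

section
/- Suppose S ⊆ A × B is a shuffling relation between linear orders (A,<_A) and (B,<_B). Then the map J ↦ ⋃_{b ∈ J} S(A,b), sending an open initial segment J of B to an open initial segment of A, is an order isomorphism between the Dedekind completions (𝔇(B),⊂) and (𝔇(A),⊂). -/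
theorem stmt_10 {A B : Type*} [LinearOrder A] [LinearOrder B] (S : A → B → Prop)
    (hS : IsShuffling S) :
    -- the map J ↦ ⋃_{b ∈ J} S(A,b) sends 𝔇(B) into 𝔇(A)
    (∀ J : Set B, OpenInitial J → OpenInitial {x : A | ∃ b ∈ J, S x b}) ∧
    -- it is an order embedding (hence injective)
    (∀ J J' : Set B, OpenInitial J → OpenInitial J' →
      (J ⊆ J' ↔ {x : A | ∃ b ∈ J, S x b} ⊆ {x : A | ∃ b ∈ J', S x b})) ∧
    -- it is surjective onto 𝔇(A)
    (∀ I : Set A, OpenInitial I →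
      ∃ J : Set B, OpenInitial J ∧ {x : A | ∃ b ∈ J, S x b} = I) := by
  obtain ⟨hne, hdc, hsi, hlub, huc, hsd⟩ := hS
  have fib_mono : ∀ {b b' : B}, b ≤ b' → {x : A | S x b} ⊆ {x : A | S x b'} := by
    intro b b' h
    rcases lt_or_eq_of_le h with h | h
    · exact (hsi b b' h).1
    · subst h; exact subset_rfl
  have le_of_nS : ∀ {y z : A} {b : B}, ¬ S y b → S z b → z ≤ y := by
    intro y z b hy hz
    by_contra h
    exact hy (hdc b z hz y (le_of_not_ge h))
  refine ⟨?_, ?_, ?_⟩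
  · -- maps into 𝔇(A)
    intro J hJ
    constructor
    · rintro x ⟨b, hb, hxb⟩ y hyx
      exact ⟨b, hb, hdc b x hxb y hyx⟩
    · rintro x ⟨b, hb, hxb⟩
      obtain ⟨b', hb', hbb'⟩ := hJ.2 b hb
      obtain ⟨z, hz1, hz2⟩ := Set.exists_of_ssubset (hsi b b' hbb')
      refine ⟨z, ⟨b', hb', hz1⟩, ?_⟩
      exact lt_of_le_of_ne (le_of_nS hz2 hxb) (fun h => hz2 (h ▸ hxb))
  · -- order embedding
    intro J J' hJ hJ'
    constructor
    · rintro h x ⟨b, hb, hxb⟩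
      exact ⟨b, h hb, hxb⟩
    · intro h b hb
      by_contra hbJ'
      obtain ⟨b₂, hb₂, hbb₂⟩ := hJ.2 b hb
      obtain ⟨z, hz1, hz2⟩ := Set.exists_of_ssubset (hsi b b₂ hbb₂)
      obtain ⟨b', hb'J, hzb'⟩ := h ⟨b₂, hb₂, hz1⟩
      have hle : b' ≤ b := by
        by_contra hh
        exact hbJ' (hJ'.1 b' hb'J b (le_of_not_ge hh))
      exact hz2 (fib_mono hle hzb')
  · -- surjective onto 𝔇(A)
    intro I hI
    have key : ∀ x ∈ I, ∃ b, S x b ∧ {x : A | S x b} ⊂ I := by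
      intro x hx
      obtain ⟨y, hy, hxy⟩ := hI.2 x hx
      obtain ⟨b, hb1, hb2⟩ := Set.exists_of_ssubset (hsd x y hxy)
      have hsub : {x : A | S x b} ⊆ I := fun z hz => hI.1 y hy z (le_of_nS hb2 hz)
      exact ⟨b, hb1, ssubset_of_subset_not_subset hsub (fun h => hb2 (h hy))⟩
    refine ⟨{b : B | {x : A | S x b} ⊂ I}, ⟨?_, ?_⟩, ?_⟩
    · intro b hb b' hb'
      exact ssubset_of_subset_of_ssubset (fib_mono hb') hb
    · intro b hb
      obtain ⟨x, hxI, hxnb⟩ := Set.exists_of_ssubset hb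
      obtain ⟨b', hxb', hb'⟩ := key x hxI
      exact ⟨b', hb', lt_of_not_ge fun h => hxnb (fib_mono h hxb')⟩
    · ext x
      constructor
      · rintro ⟨b, hb, hxb⟩
        exact hb.1 hxb
      · intro hx
        obtain ⟨b, h1, h2⟩ := key x hx
        exact ⟨b, h2, h1⟩
end

section
/- Let ((A_i,<_i))_{i<α} be a family of linear orders shuffled by a coherent family of shuffling relations (S_{i,j} ⊆ A_i × A_j)_{i<j<α}, meaning each S_{i,j} is a shuffling relation and S_{j,k} ∘ S_{i,j} = S_{i,k} for all i<j<k<α. Define π_0(x) = {y ∈ A_0 | y <_0 x} and π_i(x) = S_{0,i}(A_0,x) = {y ∈ A_0 | (y,x) ∈ S_{0,i}} for 0 < i < α. Then the images π_i(A_i), for i < α, are pairwise disjoint subsets of the Dedekind completion 𝔇(A_0). -/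
theorem stmt_11 {ι : Type*} [LinearOrder ι] [OrderBot ι]
    (A : ι → Type*) [∀ i, LinearOrder (A i)]
    (S : ∀ i j : ι, A i → A j → Prop)
    (hsh : ∀ i j : ι, i < j → IsShuffling (S i j))
    (hcoh : ∀ i j k : ι, i < j → j < k → ∀ (a : A i) (c : A k),
      S i k a c ↔ ∃ b : A j, S i j a b ∧ S j k b c)
    (π : ∀ i, A i → Set (A ⊥))
    (hπ0 : ∀ x : A ⊥, π ⊥ x = {y : A ⊥ | y < x})
    (hπ : ∀ i : ι, ⊥ < i → ∀ x : A i, π i x = {y : A ⊥ | S ⊥ i y x}) :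
    ∀ i j : ι, i ≠ j → ∀ (x : A i) (y : A j), π i x ≠ π j y := by
  -- For ⊥ < i, the set π i x has no least upper bound.
  have key : ∀ i, ⊥ < i → ∀ x : A i, ¬ ∃ a, IsLUB (π i x) a := by
    intro i hi x
    rw [hπ i hi x]
    exact (hsh ⊥ i hi).2.2.2.1 x
  -- π ⊥ x always has a least upper bound.
  have lub0 : ∀ x : A ⊥, ∃ a, IsLUB (π ⊥ x) a := by
    intro x
    rw [hπ0]
    by_cases h : ∀ b ∈ upperBounds {y : A ⊥ | y < x}, x ≤ b
    · exact ⟨x, fun z hz => le_of_lt hz, h⟩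
    · push_neg at h
      obtain ⟨b, hb, hbx⟩ := h
      exact ⟨b, fun z hz => hb hz, fun c hc => hc hbx⟩
  have main : ∀ i j : ι, i < j → ∀ (x : A i) (y : A j), π i x ≠ π j y := by
    intro i j hij x y heq
    rcases eq_or_lt_of_le (bot_le : ⊥ ≤ i) with hi | hi
    · -- i = ⊥ : π ⊥ x has a LUB, π j y does not
      subst hi
      exact key j hij y (heq ▸ lub0 x)
    · -- ⊥ < i < j
      have hj : (⊥ : ι) < j := hi.trans hij
      rw [hπ i hi x, hπ j hj y] at heq
      -- x is an upper bound of B := {b | S i j b y}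
      have hub : x ∈ upperBounds {b : A i | S i j b y} := by
        intro b hb
        by_contra hxb
        push_neg at hxb
        have hsub : {z : A ⊥ | S ⊥ i z x} ⊂ {z : A ⊥ | S ⊥ i z b} :=
          (hsh ⊥ i hi).2.2.1 x b hxb
        exact hsub.2 fun z hz => by
          have hzy : S ⊥ j z y := (hcoh ⊥ i j hi hij z y).mpr ⟨b, hz, hb⟩
          exact (Set.ext_iff.mp heq z).mpr hzy
      -- B has no LUB, so there is an upper bound b0 < x
      have hnl := (hsh i j hij).2.2.2.1 y
      have hex : ∃ b0 ∈ upperBounds {b : A i | S i j b y}, ¬ x ≤ b0 := by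
        by_contra h
        push_neg at h
        exact hnl ⟨x, hub, fun b0 hb0 => h b0 hb0⟩
      obtain ⟨b0, hb0ub, hb0x⟩ := hex
      have hb0x' : b0 < x := lt_of_not_ge hb0x
      have hss : {z : A ⊥ | S ⊥ i z b0} ⊂ {z : A ⊥ | S ⊥ i z x} :=
        (hsh ⊥ i hi).2.2.1 b0 x hb0x'
      obtain ⟨z, hzx, hzb0⟩ := Set.exists_of_ssubset hss
      have hzy : S ⊥ j z y := (Set.ext_iff.mp heq z).mp hzx
      obtain ⟨b, hzb, hby⟩ := (hcoh ⊥ i j hi hij z y).mp hzy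
      rcases eq_or_lt_of_le (hb0ub hby) with h | h
      · exact hzb0 (h ▸ hzb)
      · exact hzb0 (((hsh ⊥ i hi).2.2.1 b b0 h).1 hzb)
  intro i j hij x y
  rcases lt_trichotomy i j with h | h | h
  · exact main i j h x y
  · exact absurd h hij
  · exact fun e => main j i h y x e.symm
end

section
/- Let ((A_i,<_i))_{i<α} be a family of linear orders shuffled by a coherent family of shuffling relations (S_{i,j})_{i<j<α} (each S_{i,j} a shuffling relation with S_{j,k} ∘ S_{i,j} = S_{i,k}), with canonical embeddings π_i into 𝔇(A_0) given by π_0(x) = {y | y <_0 x} and π_i(x) = S_{0,i}(A_0,x). Then for all i < j < α, a_i ∈ A_i and a_j ∈ A_j: π_i(a_i) ⊊ π_j(a_j) if and only if (a_i,a_j) ∈ S_{i,j}. -/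
theorem stmt_12 {ι : Type*} [LinearOrder ι] [OrderBot ι]
    (A : ι → Type*) [∀ i, LinearOrder (A i)]
    (S : ∀ i j : ι, A i → A j → Prop)
    (hsh : ∀ i j : ι, i < j → IsShuffling (S i j))
    (hcoh : ∀ i j k : ι, i < j → j < k → ∀ (a : A i) (c : A k),
      S i k a c ↔ ∃ b : A j, S i j a b ∧ S j k b c)
    (π : ∀ i, A i → Set (A ⊥))
    (hπ0 : ∀ x : A ⊥, π ⊥ x = {y : A ⊥ | y < x})
    (hπ : ∀ i : ι, ⊥ < i → ∀ x : A i, π i x = {y : A ⊥ | S ⊥ i y x}) :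
    ∀ i j : ι, i < j → ∀ (a : A i) (b : A j), π i a ⊂ π j b ↔ S i j a b := by
  intro i j hij a b
  obtain ⟨-, hdownj, -, hsupj, -, -⟩ := hsh i j hij
  rcases eq_bot_or_bot_lt i with rfl | hbi
  · rw [hπ0, hπ j hij, Set.ssubset_def]
    constructor
    · rintro ⟨hsub, hne⟩
      obtain ⟨y, hy1, hy2⟩ := Set.not_subset.mp hne
      exact hdownj b y hy1 a (not_lt.mp hy2)
    · intro hab
      refine ⟨fun y hy => hdownj b a hab y (le_of_lt hy), fun h => ?_⟩
      exact lt_irrefl a (h hab)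
  · have hbj := hbi.trans hij
    obtain ⟨-, -, hmonoi, -, -, -⟩ := hsh ⊥ i hbi
    rw [hπ i hbi, hπ j hbj, Set.ssubset_def]
    constructor
    · rintro ⟨hsub, hne⟩
      obtain ⟨y, hy1, hy2⟩ := Set.not_subset.mp hne
      obtain ⟨m, hym, hmb⟩ := (hcoh ⊥ i j hbi hij y b).mp hy1
      rcases le_or_gt m a with hma | ham
      · rcases lt_or_eq_of_le hma with h | rfl
        · exact absurd ((hmonoi m a h).1 hym) hy2
        · exact absurd hym hy2
      · exact hdownj b m hmb a (le_of_lt ham)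
    · intro hab
      have hex : ∃ m, S i j m b ∧ a < m := by
        by_contra h
        push_neg at h
        exact hsupj b ⟨a, ⟨fun x hx => h x hx, fun u hu => hu hab⟩⟩
      obtain ⟨m, hmb, ham⟩ := hex
      obtain ⟨y, hy1, hy2⟩ := Set.exists_of_ssubset (hmonoi a m ham)
      refine ⟨fun z hz => (hcoh ⊥ i j hbi hij z b).mpr ⟨a, hz, hab⟩, fun h => ?_⟩
      exact hy2 (h ((hcoh ⊥ i j hbi hij y b).mpr ⟨m, hy1, hmb⟩))
end

section
/- Let ((A_i,<_{A_i}))_{i<α} and ((B_i,<_{B_i}))_{i<α} (α ≤ ω) be countable sequences of countable linear orders, shuffled by coherent families of shuffling relations (S^A_{i,j})_{i<j<α} and (S^B_{i,j})_{i<j<α} respectively. If (A_i,<_{A_i}) ≅ (B_i,<_{B_i}) for all i < α, then there exist order isomorphisms f_i : A_i → B_i such that for all i < j < α, x ∈ A_i and y ∈ A_j: (x,y) ∈ S^A_{i,j} if and only if (f_i(x),f_j(y)) ∈ S^B_{i,j}. -/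
section BF
variable {X Y κ : Type*}
variable (R : X → X → Prop) (T : Y → Y → Prop) (c : X → κ) (d : Y → κ)

/-- Finite partial colored isomorphisms. -/
def BFGood (f : Finset (X × Y)) : Prop :=
  (∀ p ∈ f, d p.2 = c p.1) ∧
  (∀ p ∈ f, ∀ q ∈ f, (R p.1 q.1 ↔ T p.2 q.2) ∧ (p.1 = q.1 ↔ p.2 = q.2)) ∧
  (∀ p ∈ f, ((∀ z, ¬ R p.1 z) ↔ (∀ w, ¬ T p.2 w)) ∧
    ((∀ z, ¬ R z p.1) ↔ (∀ w, ¬ T w p.2)))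

theorem bfgood_empty : BFGood R T c d ∅ := by
  refine ⟨?_, ?_, ?_⟩ <;> intro p hp <;> simp at hp

theorem bfgood_swap {f : Finset (X × Y)} (hf : BFGood R T c d f) :
    BFGood T R d c (f.map (Equiv.prodComm X Y).toEmbedding) := by
  obtain ⟨h1, h2, h3⟩ := hf
  refine ⟨?_, ?_, ?_⟩
  · rintro p hp
    rw [Finset.mem_map_equiv] at hp
    exact (h1 _ hp).symm
  · rintro p hp q hq
    rw [Finset.mem_map_equiv] at hp
    rw [Finset.mem_map_equiv] at hq
    exact ⟨(h2 _ hp _ hq).1.symm, (h2 _ hp _ hq).2.symm⟩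
  · rintro p hp
    rw [Finset.mem_map_equiv] at hp
    exact ⟨(h3 _ hp).1.symm, (h3 _ hp).2.symm⟩

theorem bf_exists_greatest (hRtot : ∀ x y : X, x ≠ y → R x y ∨ R y x)
    (hRtr : ∀ {x y z : X}, R x y → R y z → R x z)
    (s : Finset (X × Y)) (hs : s.Nonempty) :
    ∃ p ∈ s, ∀ q ∈ s, q.1 ≠ p.1 → R q.1 p.1 := by
  classical
  induction s using Finset.induction_on with
  | empty => exact absurd hs (by simp)
  | @insert a s ha IH =>
    rcases s.eq_empty_or_nonempty with rfl | hs'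
    · exact ⟨a, by simp, by rintro q hq hne; simp at hq; subst hq; exact absurd rfl hne⟩
    · obtain ⟨p, hp, hpmax⟩ := IH hs'
      by_cases h1 : a.1 = p.1
      · refine ⟨p, Finset.mem_insert_of_mem hp, ?_⟩
        intro q hq hne
        rcases Finset.mem_insert.1 hq with rfl | hq'
        · exact absurd h1 hne
        · exact hpmax q hq' hne
      · by_cases h2 : R a.1 p.1
        · refine ⟨p, Finset.mem_insert_of_mem hp, ?_⟩
          intro q hq hne
          rcases Finset.mem_insert.1 hq with rfl | hq'
          · exact h2
          · exact hpmax q hq' hne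
        · have hpa : R p.1 a.1 := ((hRtot a.1 p.1 h1).resolve_left h2)
          refine ⟨a, Finset.mem_insert_self a s, ?_⟩
          intro q hq hne
          rcases Finset.mem_insert.1 hq with rfl | hq'
          · exact absurd rfl hne
          · by_cases hqp : q.1 = p.1
            · rw [hqp]; exact hpa
            · exact hRtr (hpmax q hq' hqp) hpa

variable {R T c d}

theorem bf_extend
    (hRtot : ∀ x y : X, x ≠ y → R x y ∨ R y x) (hRirr : ∀ x, ¬ R x x)
    (hRtr : ∀ {x y z : X}, R x y → R y z → R x z)
    (hTtot : ∀ x y : Y, x ≠ y → T x y ∨ T y x) (hTirr : ∀ y, ¬ T y y)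
    (hTtr : ∀ {x y z : Y}, T x y → T y z → T x z)
    (hYd : ∀ u w, T u w → ∀ k, ∃ v, d v = k ∧ T u v ∧ T v w)
    (hXc : ∀ k, ∃ x, c x = k) (hYc : ∀ k, ∃ y, d y = k)
    (htop : ∀ k, (∃ x, c x = k ∧ ∀ z, ¬ R x z) ↔ (∃ y, d y = k ∧ ∀ w, ¬ T y w))
    (hbot : ∀ k, (∃ x, c x = k ∧ ∀ z, ¬ R z x) ↔ (∃ y, d y = k ∧ ∀ w, ¬ T w y))
    (hκ : ∀ k : κ, ∃ k', k' ≠ k)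
    (f : Finset (X × Y)) (hf : BFGood R T c d f) (x : X) :
    ∃ g : Finset (X × Y), BFGood R T c d g ∧ f ⊆ g ∧ ∃ y, (x, y) ∈ g := by
  classical
  obtain ⟨h1, h2, h3⟩ := hf
  -- asymmetry facts
  have hRasym : ∀ {a b : X}, R a b → ¬ R b a := fun {a b} h h' => hRirr a (hRtr h h')
  have hTasym : ∀ {a b : Y}, T a b → ¬ T b a := fun {a b} h h' => hTirr a (hTtr h h')
  by_cases hx : ∃ p ∈ f, p.1 = x
  · obtain ⟨p, hp, hp1⟩ := hx
    exact ⟨f, ⟨h1, h2, h3⟩, Finset.Subset.refl f, p.2, by rw [← hp1]; exact hp⟩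
  push_neg at hx
  -- it suffices to find a suitable y
  suffices hy : ∃ y, d y = c x ∧ (∀ p ∈ f, (R p.1 x → T p.2 y) ∧ (R x p.1 → T y p.2)) ∧
      ((∀ z, ¬ R x z) ↔ (∀ w, ¬ T y w)) ∧ ((∀ z, ¬ R z x) ↔ (∀ w, ¬ T w y)) by
    obtain ⟨y, hyc, hyrel, hytop, hybot⟩ := hy
    have key : ∀ p ∈ f, (R p.1 x ↔ T p.2 y) ∧ (R x p.1 ↔ T y p.2) ∧ p.1 ≠ x ∧ p.2 ≠ y := by
      intro p hp
      have hne := hx p hp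
      rcases hRtot p.1 x hne with h | h
      · have hT := (hyrel p hp).1 h
        exact ⟨⟨fun _ => hT, fun _ => h⟩,
          ⟨fun h' => absurd h (hRasym h'), fun h' => absurd hT (hTasym h')⟩,
          hne, fun he => hTirr y (he ▸ hT)⟩
      · have hT := (hyrel p hp).2 h
        exact ⟨⟨fun h' => absurd h (hRasym h'), fun h' => absurd hT (hTasym h')⟩,
          ⟨fun _ => hT, fun _ => h⟩, hne, fun he => hTirr y (he ▸ hT)⟩
    refine ⟨insert (x, y) f, ⟨?_, ?_, ?_⟩, Finset.subset_insert _ f, y, Finset.mem_insert_self _ f⟩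
    · intro p hp
      rcases Finset.mem_insert.1 hp with rfl | hp'
      · exact hyc
      · exact h1 p hp'
    · intro p hp q hq
      rcases Finset.mem_insert.1 hp with rfl | hp' <;> rcases Finset.mem_insert.1 hq with rfl | hq'
      · exact ⟨by simp [hRirr x, hTirr y], by simp⟩
      · obtain ⟨k1, k2, k3, k4⟩ := key q hq'
        constructor
        · simpa using k2
        · simp only []
          constructor
          · intro h; exact absurd h.symm k3
          · intro h; exact absurd h.symm k4
      · obtain ⟨k1, k2, k3, k4⟩ := key p hp'
        exact ⟨k1, ⟨fun h => absurd h k3, fun h => absurd h k4⟩⟩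
      · exact h2 p hp' q hq'
    · intro p hp
      rcases Finset.mem_insert.1 hp with rfl | hp'
      · exact ⟨hytop, hybot⟩
      · exact h3 p hp'
  -- now find y, by cases on the position of x relative to f
  by_cases hL : ∃ p ∈ f, R p.1 x <;> by_cases hU : ∃ p ∈ f, R x p.1
  · -- x lies strictly between elements of f
    obtain ⟨l, hlmem, hlmax⟩ := bf_exists_greatest R hRtot hRtr
      (f.filter (fun p => R p.1 x)) (let ⟨p, hp, h⟩ := hL; ⟨p, Finset.mem_filter.2 ⟨hp, h⟩⟩)
    obtain ⟨u, humem, humin⟩ := bf_exists_greatest (fun a b => R b a)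
      (fun a b h => (hRtot b a (Ne.symm h)))
      (fun {a b z} h h' => hRtr h' h)
      (f.filter (fun p => R x p.1)) (let ⟨p, hp, h⟩ := hU; ⟨p, Finset.mem_filter.2 ⟨hp, h⟩⟩)
    obtain ⟨hlf, hlR⟩ := Finset.mem_filter.1 hlmem
    obtain ⟨huf, huR⟩ := Finset.mem_filter.1 humem
    have hlu : T l.2 u.2 := (h2 l hlf u huf).1.1 (hRtr hlR huR)
    obtain ⟨y, hyc, hy1, hy2⟩ := hYd l.2 u.2 hlu (c x)
    refine ⟨y, hyc, ?_, ?_, ?_⟩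
    · intro p hp
      constructor
      · intro hpx
        by_cases hpl : p.1 = l.1
        · have : p.2 = l.2 := (h2 p hp l hlf).2.1 hpl
          rw [this]; exact hy1
        · exact hTtr ((h2 p hp l hlf).1.1 (hlmax p (Finset.mem_filter.2 ⟨hp, hpx⟩) hpl)) hy1
      · intro hxp
        by_cases hpu : p.1 = u.1
        · have : p.2 = u.2 := (h2 p hp u huf).2.1 hpu
          rw [this]; exact hy2
        · exact hTtr hy2 ((h2 u huf p hp).1.1 (humin p (Finset.mem_filter.2 ⟨hp, hxp⟩) hpu))
    · constructor
      · intro h; exact absurd huR (h u.1)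
      · intro h; exact absurd hy2 (h u.2)
    · constructor
      · intro h; exact absurd hlR (h l.1)
      · intro h; exact absurd hy1 (h l.2)
  · -- x is above all of f
    obtain ⟨l, hlmem, hlmax⟩ := bf_exists_greatest R hRtot hRtr
      (f.filter (fun p => R p.1 x)) (let ⟨p, hp, h⟩ := hL; ⟨p, Finset.mem_filter.2 ⟨hp, h⟩⟩)
    obtain ⟨hlf, hlR⟩ := Finset.mem_filter.1 hlmem
    push_neg at hU
    have habove : ∀ p ∈ f, R p.1 x := by
      intro p hp
      rcases hRtot p.1 x (hx p hp) with h | h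
      · exact h
      · exact absurd h (hU p hp)
    -- helper to conclude given y above l.2
    have mk : ∀ y, d y = c x → T l.2 y →
        ((∀ z, ¬ R x z) ↔ (∀ w, ¬ T y w)) →
        ∃ y', d y' = c x ∧ (∀ p ∈ f, (R p.1 x → T p.2 y') ∧ (R x p.1 → T y' p.2)) ∧
        ((∀ z, ¬ R x z) ↔ (∀ w, ¬ T y' w)) ∧ ((∀ z, ¬ R z x) ↔ (∀ w, ¬ T w y')) := by
      intro y hyc hly htopiff
      refine ⟨y, hyc, ?_, htopiff, ?_⟩
      · intro p hp
        refine ⟨?_, fun h => absurd h (hU p hp)⟩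
        intro hpx
        by_cases hpl : p.1 = l.1
        · have : p.2 = l.2 := (h2 p hp l hlf).2.1 hpl
          rw [this]; exact hly
        · exact hTtr ((h2 p hp l hlf).1.1 (hlmax p (Finset.mem_filter.2 ⟨hp, hpx⟩) hpl)) hly
      · constructor
        · intro h; exact absurd hlR (h l.1)
        · intro h; exact absurd hly (h l.2)
    by_cases hxt : ∀ z, ¬ R x z
    · -- x is the top of X
      obtain ⟨y, hyc, hyt⟩ := (htop (c x)).1 ⟨x, rfl, hxt⟩
      have hly : T l.2 y := by
        have hne : l.2 ≠ y := by
          intro he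
          have : ∀ z, ¬ R l.1 z := ((h3 l hlf).1).2 (he ▸ hyt)
          exact this x hlR
        rcases hTtot l.2 y hne with h | h
        · exact h
        · exact absurd h (hyt l.2)
      exact mk y hyc hly ⟨fun _ => hyt, fun _ => hxt⟩
    · -- x is not the top of X; need y above l.2 that is not the top of Y
      push_neg at hxt
      have hl2nt : ∃ w, T l.2 w := by
        have : ¬ ∀ w, ¬ T l.2 w := by
          intro h
          have : ∀ z, ¬ R l.1 z := ((h3 l hlf).1).2 h
          exact this x hlR
        push_neg at this; exact this
      obtain ⟨w, hw⟩ := hl2nt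
      obtain ⟨y, hyc, hy1, hy2⟩ := hYd l.2 w hw (c x)
      refine mk y hyc hy1 ⟨fun h => absurd (hxt.choose_spec) (h _), fun h => absurd hy2 (h w)⟩
  · -- x is below all of f
    obtain ⟨u, humem, humin⟩ := bf_exists_greatest (fun a b => R b a)
      (fun a b h => (hRtot b a (Ne.symm h)))
      (fun {a b z} h h' => hRtr h' h)
      (f.filter (fun p => R x p.1)) (let ⟨p, hp, h⟩ := hU; ⟨p, Finset.mem_filter.2 ⟨hp, h⟩⟩)
    obtain ⟨huf, huR⟩ := Finset.mem_filter.1 humem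
    push_neg at hL
    have mk : ∀ y, d y = c x → T y u.2 →
        ((∀ z, ¬ R z x) ↔ (∀ w, ¬ T w y)) →
        ∃ y', d y' = c x ∧ (∀ p ∈ f, (R p.1 x → T p.2 y') ∧ (R x p.1 → T y' p.2)) ∧
        ((∀ z, ¬ R x z) ↔ (∀ w, ¬ T y' w)) ∧ ((∀ z, ¬ R z x) ↔ (∀ w, ¬ T w y')) := by
      intro y hyc hly hbotiff
      refine ⟨y, hyc, ?_, ?_, hbotiff⟩
      · intro p hp
        refine ⟨fun h => absurd h (hL p hp), ?_⟩
        intro hxp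
        by_cases hpu : p.1 = u.1
        · have : p.2 = u.2 := (h2 p hp u huf).2.1 hpu
          rw [this]; exact hly
        · exact hTtr hly ((h2 u huf p hp).1.1 (humin p (Finset.mem_filter.2 ⟨hp, hxp⟩) hpu))
      · constructor
        · intro h; exact absurd huR (h u.1)
        · intro h; exact absurd hly (h u.2)
    by_cases hxb : ∀ z, ¬ R z x
    · obtain ⟨y, hyc, hyb⟩ := (hbot (c x)).1 ⟨x, rfl, hxb⟩
      have hly : T y u.2 := by
        have hne : u.2 ≠ y := by
          intro he
          have : ∀ z, ¬ R z u.1 := ((h3 u huf).2).2 (he ▸ hyb)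
          exact this x huR
        rcases hTtot u.2 y hne with h | h
        · exact absurd h (hyb u.2)
        · exact h
      exact mk y hyc hly ⟨fun _ => hyb, fun _ => hxb⟩
    · push_neg at hxb
      have hu2nb : ∃ w, T w u.2 := by
        have : ¬ ∀ w, ¬ T w u.2 := by
          intro h
          have : ∀ z, ¬ R z u.1 := ((h3 u huf).2).2 h
          exact this x huR
        push_neg at this; exact this
      obtain ⟨w, hw⟩ := hu2nb
      obtain ⟨y, hyc, hy1, hy2⟩ := hYd w u.2 hw (c x)
      refine mk y hyc hy2 ⟨fun h => absurd (hxb.choose_spec) (h _), fun h => absurd hy1 (h w)⟩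
  · -- f is effectively empty relative to x
    push_neg at hL hU
    have hfe : ∀ p ∈ f, False := by
      intro p hp
      rcases hRtot p.1 x (hx p hp) with h | h
      · exact hL p hp h
      · exact hU p hp h
    -- two distinct colors give two distinct elements, so no one is top and bottom
    have htwoX : ∀ z : X, ∃ z', z' ≠ z := by
      intro z
      obtain ⟨k', hk'⟩ := hκ (c z)
      obtain ⟨z', hz'⟩ := hXc k'
      exact ⟨z', fun he => hk' (hz' ▸ he ▸ rfl)⟩
    have htwoY : ∀ z : Y, ∃ z', z' ≠ z := by
      intro z
      obtain ⟨k', hk'⟩ := hκ (d z)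
      obtain ⟨z', hz'⟩ := hYc k'
      exact ⟨z', fun he => hk' (hz' ▸ he ▸ rfl)⟩
    by_cases hxt : ∀ z, ¬ R x z
    · obtain ⟨y, hyc, hyt⟩ := (htop (c x)).1 ⟨x, rfl, hxt⟩
      have hynb : ¬ ∀ w, ¬ T w y := by
        intro h
        obtain ⟨y', hy'⟩ := htwoY y
        rcases hTtot y' y hy' with h' | h'
        · exact h y' h'
        · exact hyt y' h'
      have hxnb : ¬ ∀ z, ¬ R z x := by
        intro h
        obtain ⟨x', hx'⟩ := htwoX x
        rcases hRtot x' x hx' with h' | h'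
        · exact h x' h'
        · exact hxt x' h'
      exact ⟨y, hyc, fun p hp => absurd (hfe p hp) not_false,
        ⟨fun _ => hyt, fun _ => hxt⟩, ⟨fun h => absurd h hxnb, fun h => absurd h hynb⟩⟩
    · by_cases hxb : ∀ z, ¬ R z x
      · obtain ⟨y, hyc, hyb⟩ := (hbot (c x)).1 ⟨x, rfl, hxb⟩
        have hynt : ¬ ∀ w, ¬ T y w := by
          intro h
          obtain ⟨y', hy'⟩ := htwoY y
          rcases hTtot y y' (Ne.symm hy') with h' | h'
          · exact h y' h'
          · exact hyb y' h'
        exact ⟨y, hyc, fun p hp => absurd (hfe p hp) not_false,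
          ⟨fun h => absurd h hxt, fun h => absurd h hynt⟩, ⟨fun _ => hyb, fun _ => hxb⟩⟩
      · -- x is neither top nor bottom; find y of the right color neither top nor bottom
        push_neg at hxt hxb
        have : ∃ y, d y = c x ∧ (∃ w, T y w) ∧ (∃ w, T w y) := by
          obtain ⟨y0, hy0⟩ := hYc (c x)
          by_cases h0t : ∃ w, T y0 w
          · by_cases h0b : ∃ w, T w y0
            · exact ⟨y0, hy0, h0t, h0b⟩
            · obtain ⟨w, hw⟩ := h0t
              obtain ⟨y, hyc, hy1, hy2⟩ := hYd y0 w hw (c x)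
              exact ⟨y, hyc, ⟨w, hy2⟩, ⟨y0, hy1⟩⟩
          · -- y0 is the top of Y
            push_neg at h0t
            obtain ⟨y', hy'⟩ := htwoY y0
            have h' : T y' y0 := by
              rcases hTtot y' y0 hy' with h | h
              · exact h
              · exact absurd h (h0t y')
            obtain ⟨y, hyc, hy1, hy2⟩ := hYd y' y0 h' (c x)
            exact ⟨y, hyc, ⟨y0, hy2⟩, ⟨y', hy1⟩⟩
        obtain ⟨y, hyc, ⟨w1, hw1⟩, ⟨w2, hw2⟩⟩ := this
        exact ⟨y, hyc, fun p hp => absurd (hfe p hp) not_false,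
          ⟨fun h => absurd hxt.choose_spec (h _), fun h => absurd hw1 (h w1)⟩,
          ⟨fun h => absurd hxb.choose_spec (h _), fun h => absurd hw2 (h w2)⟩⟩

theorem bf_main [Countable X] [Countable Y]
    (hRtot : ∀ x y : X, x ≠ y → R x y ∨ R y x) (hRirr : ∀ x, ¬ R x x)
    (hRtr : ∀ {x y z : X}, R x y → R y z → R x z)
    (hTtot : ∀ x y : Y, x ≠ y → T x y ∨ T y x) (hTirr : ∀ y, ¬ T y y)
    (hTtr : ∀ {x y z : Y}, T x y → T y z → T x z)
    (hXd : ∀ u w, R u w → ∀ k, ∃ v, c v = k ∧ R u v ∧ R v w)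
    (hYd : ∀ u w, T u w → ∀ k, ∃ v, d v = k ∧ T u v ∧ T v w)
    (hXc : ∀ k, ∃ x, c x = k) (hYc : ∀ k, ∃ y, d y = k)
    (htop : ∀ k, (∃ x, c x = k ∧ ∀ z, ¬ R x z) ↔ (∃ y, d y = k ∧ ∀ w, ¬ T y w))
    (hbot : ∀ k, (∃ x, c x = k ∧ ∀ z, ¬ R z x) ↔ (∃ y, d y = k ∧ ∀ w, ¬ T w y))
    (hκ : ∀ k : κ, ∃ k', k' ≠ k) :
    ∃ F : X → Y, Function.Bijective F ∧ (∀ x x', R x x' ↔ T (F x) (F x')) ∧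
      ∀ x, d (F x) = c x := by
  classical
  haveI : Encodable (X ⊕ Y) := (nonempty_encodable _).some
  set P := {f : Finset (X × Y) // BFGood R T c d f} with hP
  have swap_back : ∀ {g : Finset (Y × X)}, BFGood T R d c g →
      BFGood R T c d (g.map (Equiv.prodComm Y X).toEmbedding) := fun hg => bfgood_swap T R d c hg
  -- cofinal families
  have Dleft : ∀ x : X, ∀ g : P, ∃ g' : P, (∃ y, (x, y) ∈ g'.val) ∧ g ≤ g' := by
    intro x g
    obtain ⟨g', hg', hsub, y, hy⟩ := bf_extend hRtot hRirr hRtr hTtot hTirr hTtr hYd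
      hXc hYc htop hbot hκ g.val g.property x
    exact ⟨⟨g', hg'⟩, ⟨y, hy⟩, hsub⟩
  have Dright : ∀ y : Y, ∀ g : P, ∃ g' : P, (∃ x, (x, y) ∈ g'.val) ∧ g ≤ g' := by
    intro y g
    obtain ⟨g', hg', hsub, x, hx⟩ := bf_extend hTtot hTirr hTtr hRtot hRirr hRtr
      (fun u w h k => hXd u w h k)
      hYc hXc (fun k => (htop k).symm) (fun k => (hbot k).symm) hκ
      (g.val.map (Equiv.prodComm X Y).toEmbedding) (bfgood_swap R T c d g.property) y
    refine ⟨⟨g'.map (Equiv.prodComm Y X).toEmbedding, swap_back hg'⟩, ⟨x, ?_⟩, ?_⟩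
    · rw [Finset.mem_map_equiv]; exact hx
    · intro p hp
      have : (Equiv.prodComm X Y) p ∈ g.val.map (Equiv.prodComm X Y).toEmbedding := by
        rw [Finset.mem_map_equiv]; simpa using hp
      have h2 := hsub this
      rw [Finset.mem_map_equiv]; simpa using h2
  let D : X ⊕ Y → Order.Cofinal P := fun z =>
    match z with
    | Sum.inl x => ⟨{g : P | ∃ y, (x, y) ∈ g.val}, fun g => by
        obtain ⟨g', hg', hle⟩ := Dleft x g; exact ⟨g', hg', hle⟩⟩
    | Sum.inr y => ⟨{g : P | ∃ x, (x, y) ∈ g.val}, fun g => by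
        obtain ⟨g', hg', hle⟩ := Dright y g; exact ⟨g', hg', hle⟩⟩
  let I := Order.idealOfCofinals (⟨∅, bfgood_empty R T c d⟩ : P) D
  have hmeets := Order.cofinal_meets_idealOfCofinals (⟨∅, bfgood_empty R T c d⟩ : P) D
  -- any pair in the ideal is coherent with any other
  have hpair : ∀ {x y x' y'} {g g' : P}, g ∈ I → g' ∈ I → (x, y) ∈ g.val → (x', y') ∈ g'.val →
      (R x x' ↔ T y y') ∧ (x = x' ↔ y = y') ∧ d y = c x := by
    intro x y x' y' g g' hg hg' hxy hxy'
    obtain ⟨h, hhI, hgh, hg'h⟩ := I.directed g hg g' hg'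
    have hh := h.property
    have m1 : (x, y) ∈ h.val := hgh hxy
    have m2 : (x', y') ∈ h.val := hg'h hxy'
    exact ⟨(hh.2.1 _ m1 _ m2).1, (hh.2.1 _ m1 _ m2).2, hh.1 _ m1⟩
  have hex : ∀ x : X, ∃ y, ∃ g : P, g ∈ I ∧ (x, y) ∈ g.val := by
    intro x
    obtain ⟨g, hgD, hgI⟩ := hmeets (Sum.inl x)
    obtain ⟨y, hy⟩ := hgD
    exact ⟨y, g, hgI, hy⟩
  choose F G hGI hGmem using hex
  refine ⟨F, ⟨?_, ?_⟩, ?_, ?_⟩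
  · intro x x' hFF
    exact ((hpair (hGI x) (hGI x') (hGmem x) (hGmem x')).2.1).2 hFF
  · intro y
    obtain ⟨g, hgD, hgI⟩ := hmeets (Sum.inr y)
    obtain ⟨x, hx⟩ := hgD
    refine ⟨x, ?_⟩
    exact ((hpair (hGI x) hgI (hGmem x) hx).2.1).1 rfl
  · intro x x'
    exact (hpair (hGI x) (hGI x') (hGmem x) (hGmem x')).1
  · intro x
    exact (hpair (hGI x) (hGI x) (hGmem x) (hGmem x)).2.2

end BF

section Shuffle

variable {ι : Type*} [LinearOrder ι] {A : ι → Type*} [∀ i, LinearOrder (A i)]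
  {SA : ∀ i j : ι, A i → A j → Prop}

/-- The shuffled linear order on `Σ i, A i`. -/
def srel (SA : ∀ i j : ι, A i → A j → Prop) : (Σ i, A i) → (Σ i, A i) → Prop :=
  fun u v => (u.1 < v.1 ∧ SA u.1 v.1 u.2 v.2) ∨ (v.1 < u.1 ∧ ¬ SA v.1 u.1 v.2 u.2) ∨
    (∃ h : u.1 = v.1, (h ▸ u.2 : A v.1) < v.2)

theorem srel_same {i : ι} {a b : A i} : srel SA ⟨i, a⟩ ⟨i, b⟩ ↔ a < b := by
  constructor
  · rintro (⟨h, _⟩ | ⟨h, _⟩ | ⟨h, hlt⟩)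
    · exact absurd h (lt_irrefl i)
    · exact absurd h (lt_irrefl i)
    · exact hlt
  · intro h; exact Or.inr (Or.inr ⟨rfl, h⟩)

theorem srel_lt {i j : ι} (hij : i < j) {a : A i} {b : A j} :
    srel SA ⟨i, a⟩ ⟨j, b⟩ ↔ SA i j a b := by
  constructor
  · rintro (⟨h, hS⟩ | ⟨h, _⟩ | ⟨h, hlt⟩)
    · exact hS
    · exact absurd h (lt_asymm hij)
    · exact absurd h (ne_of_lt hij)
  · intro h; exact Or.inl ⟨hij, h⟩

theorem srel_gt {i j : ι} (hij : i < j) {a : A i} {b : A j} :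
    srel SA ⟨j, b⟩ ⟨i, a⟩ ↔ ¬ SA i j a b := by
  constructor
  · rintro (⟨h, _⟩ | ⟨h, hS⟩ | ⟨h, hlt⟩)
    · exact absurd h (lt_asymm hij)
    · exact hS
    · exact absurd h (ne_of_gt hij)
  · intro h; exact Or.inr (Or.inl ⟨hij, h⟩)

variable (hsh : ∀ i j : ι, i < j → IsShuffling (SA i j))

section Facts
variable {i j : ι} (hij : i < j)
include hsh hij

theorem sh_down {x y : A i} {b : A j} (h : SA i j x b) (hyx : y ≤ x) : SA i j y b :=
  (hsh i j hij).2.1 b x h y hyx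

theorem sh_up {a : A i} {y y' : A j} (h : SA i j a y) (hyy : y ≤ y') : SA i j a y' :=
  (hsh i j hij).2.2.2.2.1 a y h y' hyy

theorem sh_fiber_strict {b b' : A j} (h : b < b') : ∃ x, SA i j x b' ∧ ¬ SA i j x b := by
  obtain ⟨x, hx1, hx2⟩ := Set.exists_of_ssubset ((hsh i j hij).2.2.1 b b' h)
  exact ⟨x, hx1, hx2⟩

theorem sh_F_strict {a a' : A i} (h : a < a') : ∃ y, SA i j a y ∧ ¬ SA i j a' y := by
  obtain ⟨y, hy1, hy2⟩ := Set.exists_of_ssubset ((hsh i j hij).2.2.2.2.2 a a' h)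
  exact ⟨y, hy1, hy2⟩

theorem sh_above {x : A i} {b : A j} (h : SA i j x b) : ∃ x', x < x' ∧ SA i j x' b := by
  by_contra hcon
  push_neg at hcon
  refine (hsh i j hij).2.2.2.1 b ⟨x, ?_, ?_⟩
  · intro y hy
    by_contra hyx
    push_neg at hyx
    exact absurd hy (by simpa using hcon y hyx)
  · intro u hu
    exact hu h

theorem sh_below_neg {x : A i} {b : A j} (h : ¬ SA i j x b) :
    ∃ x', x' < x ∧ ¬ SA i j x' b := by
  by_contra hcon
  push_neg at hcon
  apply (hsh i j hij).2.2.2.1 b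
  by_cases hub : ∃ u, u ∈ upperBounds {x' : A i | SA i j x' b} ∧ u < x
  · obtain ⟨u, huub, hux⟩ := hub
    refine ⟨u, huub, ?_⟩
    intro u' hu'
    exact hu' (hcon u hux)
  · push_neg at hub
    refine ⟨x, ?_, ?_⟩
    · intro y hy
      by_contra hxy
      push_neg at hxy
      exact h (sh_down hsh hij hy (le_of_lt hxy))
    · intro u hu
      exact hub u hu

theorem sh_top_first {M : A i} (hM : ∀ z, z ≤ M) {b : A j} : ¬ SA i j M b := by
  intro h
  refine (hsh i j hij).2.2.2.1 b ⟨M, ?_, ?_⟩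
  · intro y _; exact hM y
  · intro u hu
    exact hu (sh_down hsh hij h (hM M))

theorem sh_nonempty_F {a : A i} (ha : ¬ ∀ z, z ≤ a) : ∃ y, SA i j a y := by
  push_neg at ha
  obtain ⟨z, hz⟩ := ha
  obtain ⟨y, hy, _⟩ := sh_F_strict hsh hij hz
  exact ⟨y, hy⟩

theorem sh_bot_fiber_empty {m : A j} (hm : ∀ z, m ≤ z) {x : A i} : ¬ SA i j x m := by
  intro h
  have hbot : ∀ z : A i, SA i j z m → ∀ w, z ≤ w := by
    intro z hz w
    by_contra hzw
    push_neg at hzw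
    obtain ⟨y, hy1, hy2⟩ := sh_F_strict hsh hij hzw
    exact hy2 (sh_up hsh hij hz (hm y))
  refine (hsh i j hij).2.2.2.1 m ⟨x, ?_, ?_⟩
  · intro y hy; exact hbot y hy x
  · intro u hu; exact hu h

theorem sh_bot_fiber_nonempty {m : A i} (hm : ∀ z, m ≤ z) (b : A j) : ∃ x, SA i j x b := by
  by_contra hcon
  push_neg at hcon
  refine (hsh i j hij).2.2.2.1 b ⟨m, ?_, ?_⟩
  · intro y hy; exact absurd hy (hcon y)
  · intro u _; exact hm u

end Facts

variable (hcoh : ∀ i j k : ι, i < j → j < k → ∀ (a : A i) (c : A k),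
      SA i k a c ↔ ∃ b : A j, SA i j a b ∧ SA j k b c)

theorem srel_irrefl (u : Σ i, A i) : ¬ srel SA u u := by
  obtain ⟨i, a⟩ := u
  rw [srel_same]
  exact lt_irrefl a

theorem srel_total (u v : Σ i, A i) (huv : u ≠ v) : srel SA u v ∨ srel SA v u := by
  obtain ⟨i, a⟩ := u
  obtain ⟨j, b⟩ := v
  rcases lt_trichotomy i j with h | rfl | h
  · by_cases hS : SA i j a b
    · exact Or.inl ((srel_lt h).2 hS)
    · exact Or.inr ((srel_gt h).2 hS)
  · have hab : a ≠ b := fun he => huv (by rw [he])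
    rcases lt_or_gt_of_ne hab with h | h
    · exact Or.inl (srel_same.2 h)
    · exact Or.inr (srel_same.2 h)
  · by_cases hS : SA j i b a
    · exact Or.inr ((srel_lt h).2 hS)
    · exact Or.inl ((srel_gt h).2 hS)

include hsh hcoh in
theorem srel_trans {u v w : Σ i, A i} (h1 : srel SA u v) (h2 : srel SA v w) :
    srel SA u w := by
  obtain ⟨i, a⟩ := u
  obtain ⟨j, b⟩ := v
  obtain ⟨k, c⟩ := w
  rcases lt_trichotomy i j with hij | rfl | hji
  · rw [srel_lt hij] at h1
    rcases lt_trichotomy j k with hjk | rfl | hkj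
    · rw [srel_lt hjk] at h2
      exact (srel_lt (lt_trans hij hjk)).2 ((hcoh i j k hij hjk a c).2 ⟨b, h1, h2⟩)
    · rw [srel_same] at h2
      exact (srel_lt hij).2 (sh_up hsh hij h1 (le_of_lt h2))
    · rw [srel_gt hkj] at h2
      rcases lt_trichotomy i k with hik | rfl | hki
      · refine (srel_lt hik).2 ?_
        obtain ⟨m, hm1, hm2⟩ := (hcoh i k j hik hkj a b).1 h1
        have hmc : m ≤ c := by
          by_contra hcm
          push_neg at hcm
          exact h2 (sh_down hsh hkj hm2 (le_of_lt hcm))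
        exact sh_up hsh hik hm1 hmc
      · refine srel_same.2 ?_
        by_contra hca
        push_neg at hca
        exact h2 (sh_down hsh hij h1 hca)
      · refine (srel_gt hki).2 ?_
        intro hSka
        exact h2 ((hcoh k i j hki hij c b).2 ⟨a, hSka, h1⟩)
  · rw [srel_same] at h1
    rcases lt_trichotomy i k with hik | rfl | hki
    · rw [srel_lt hik] at h2
      exact (srel_lt hik).2 (sh_down hsh hik h2 (le_of_lt h1))
    · rw [srel_same] at h2
      exact srel_same.2 (lt_trans h1 h2)
    · rw [srel_gt hki] at h2
      refine (srel_gt hki).2 ?_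
      intro hSc
      exact h2 (sh_up hsh hki hSc (le_of_lt h1))
  · rw [srel_gt hji] at h1
    rcases lt_trichotomy j k with hjk | rfl | hkj
    · rw [srel_lt hjk] at h2
      rcases lt_trichotomy i k with hik | rfl | hki
      · refine (srel_lt hik).2 ?_
        obtain ⟨m, hm1, hm2⟩ := (hcoh j i k hji hik b c).1 h2
        have ham : a ≤ m := by
          by_contra hma
          push_neg at hma
          exact h1 (sh_up hsh hji hm1 (le_of_lt hma))
        exact sh_down hsh hik hm2 ham
      · refine srel_same.2 ?_
        by_contra hca
        push_neg at hca
        exact h1 (sh_up hsh hji h2 hca)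
      · refine (srel_gt hki).2 ?_
        intro hSka
        exact h1 ((hcoh j k i hjk hki b a).2 ⟨c, h2, hSka⟩)
    · rw [srel_same] at h2
      refine (srel_gt hji).2 ?_
      intro hSc
      exact h1 (sh_down hsh hji hSc (le_of_lt h2))
    · rw [srel_gt hkj] at h2
      refine (srel_gt (lt_trans hkj hji)).2 ?_
      intro hSka
      obtain ⟨m, hm1, hm2⟩ := (hcoh k j i hkj hji c a).1 hSka
      have hbm : b ≤ m := by
        by_contra hmb
        push_neg at hmb
        exact h2 (sh_up hsh hkj hm1 (le_of_lt hmb))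
      exact h1 (sh_down hsh hji hm2 hbm)

include hsh in
theorem srel_step1 {i : ι} {a a' : A i} (h : a < a') {k : ι} (hk : k ≠ i) :
    ∃ y : A k, srel SA ⟨i, a⟩ ⟨k, y⟩ ∧ srel SA ⟨k, y⟩ ⟨i, a'⟩ := by
  rcases lt_or_gt_of_ne hk with hki | hik
  · obtain ⟨y, hy1, hy2⟩ := sh_fiber_strict hsh hki h
    exact ⟨y, (srel_gt hki).2 hy2, (srel_lt hki).2 hy1⟩
  · obtain ⟨y, hy1, hy2⟩ := sh_F_strict hsh hik h
    exact ⟨y, (srel_lt hik).2 hy1, (srel_gt hik).2 hy2⟩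

include hsh hcoh in
theorem srel_dense (hpair : ∃ i0 j0 : ι, i0 < j0) :
    ∀ u w, srel SA u w → ∀ k, ∃ v : Σ i, A i, v.1 = k ∧ srel SA u v ∧ srel SA v w := by
  have trans := fun {u v w} h1 h2 => srel_trans hsh hcoh (u := u) (v := v) (w := w) h1 h2
  -- same-color density for any target
  have same : ∀ (i : ι) (a a' : A i), a < a' → ∀ k, ∃ v : Σ i, A i, v.1 = k ∧
      srel SA ⟨i, a⟩ v ∧ srel SA v ⟨i, a'⟩ := by
    intro i a a' h k
    by_cases hk : k = i
    · -- find an element of the same color strictly between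
      obtain ⟨i0, j0, hij0⟩ := hpair
      have hk' : ∃ k' : ι, k' ≠ i := by
        by_cases h0 : i0 = i
        · refine ⟨j0, fun he => absurd hij0 ?_⟩
          rw [h0, he]
          exact lt_irrefl i
        · exact ⟨i0, h0⟩
      obtain ⟨k', hk'⟩ := hk'
      obtain ⟨y, hy1, hy2⟩ := srel_step1 hsh h hk'
      rcases lt_or_gt_of_ne hk' with hkk | hkk
      · -- k' < i : get a second k'-colored point, then an i-colored point between
        have hS : SA k' i y a' := (srel_lt hkk).1 hy2
        obtain ⟨z, hz1, hz2⟩ := sh_above hsh hkk hS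
        obtain ⟨v, hv1, hv2⟩ := srel_step1 hsh hz1 (Ne.symm hk')
        exact ⟨⟨i, v⟩, hk.symm, trans hy1 hv1, trans hv2 ((srel_lt hkk).2 hz2)⟩
      · -- i < k'
        have hS : SA i k' a y := (srel_lt hkk).1 hy1
        obtain ⟨z, hz1, hz2⟩ := sh_above hsh hkk hS
        exact ⟨⟨i, z⟩, hk.symm, srel_same.2 hz1, trans ((srel_lt hkk).2 hz2) hy2⟩
    · obtain ⟨y, hy1, hy2⟩ := srel_step1 hsh h hk
      exact ⟨⟨k, y⟩, rfl, hy1, hy2⟩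
  rintro ⟨i, a⟩ ⟨j, b⟩ huw k
  rcases lt_trichotomy i j with hij | rfl | hji
  · rw [srel_lt hij] at huw
    obtain ⟨z, hz1, hz2⟩ := sh_above hsh hij huw
    -- a < z in A i, srel ⟨i,z⟩ ⟨j,b⟩
    by_cases hk : k = i
    · exact ⟨⟨i, z⟩, hk.symm, srel_same.2 hz1, (srel_lt hij).2 hz2⟩
    · obtain ⟨v, hv1, hv2, hv3⟩ := same i a z hz1 k
      exact ⟨v, hv1, hv2, trans hv3 ((srel_lt hij).2 hz2)⟩
  · rw [srel_same] at huw
    exact same i a b huw k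
  · rw [srel_gt hji] at huw
    obtain ⟨z, hz1, hz2⟩ := sh_below_neg hsh hji huw
    -- z < b in A j, srel ⟨i,a⟩ ⟨j,z⟩
    by_cases hk : k = j
    · exact ⟨⟨j, z⟩, hk.symm, (srel_gt hji).2 hz2, srel_same.2 hz1⟩
    · obtain ⟨v, hv1, hv2, hv3⟩ := same j z b hz1 k
      exact ⟨v, hv1, trans ((srel_gt hji).2 hz2) hv2, hv3⟩

include hsh in
theorem srel_top_iff (k : ι) :
    (∃ u : Σ i, A i, u.1 = k ∧ ∀ v, ¬ srel SA u v) ↔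
      ((∃ M : A k, ∀ z, z ≤ M) ∧ ∀ j, j < k → ¬ ∃ M : A j, ∀ z, z ≤ M) := by
  constructor
  · rintro ⟨⟨k', M⟩, hk', htop⟩
    simp only at hk'
    subst hk'
    constructor
    · refine ⟨M, fun z => ?_⟩
      by_contra hz
      push_neg at hz
      exact htop ⟨k', z⟩ (srel_same.2 hz)
    · rintro j hjk ⟨T, hT⟩
      have hS : SA j k' T M := by
        by_contra hS
        exact htop ⟨j, T⟩ ((srel_gt hjk).2 hS)
      exact sh_top_first hsh hjk hT hS
  · rintro ⟨⟨M, hM⟩, hless⟩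
    refine ⟨⟨k, M⟩, rfl, ?_⟩
    rintro ⟨j, y⟩ hv
    rcases lt_trichotomy j k with hjk | rfl | hkj
    · rw [srel_gt hjk] at hv
      apply hv
      obtain ⟨w, hw⟩ := sh_nonempty_F hsh hjk (by
        intro hy
        exact hless j hjk ⟨y, hy⟩)
      exact sh_up hsh hjk hw (hM w)
    · rw [srel_same] at hv
      exact absurd (hM y) (not_le_of_gt hv)
    · rw [srel_lt hkj] at hv
      exact sh_top_first hsh hkj hM hv

include hsh in
theorem srel_bot_iff (k : ι) :
    (∃ u : Σ i, A i, u.1 = k ∧ ∀ v, ¬ srel SA v u) ↔ (∃ m : A k, ∀ z, m ≤ z) := by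
  constructor
  · rintro ⟨⟨k', m⟩, hk', hbot⟩
    simp only at hk'
    subst hk'
    refine ⟨m, fun z => ?_⟩
    by_contra hz
    push_neg at hz
    exact hbot ⟨k', z⟩ (srel_same.2 hz)
  · rintro ⟨m, hm⟩
    refine ⟨⟨k, m⟩, rfl, ?_⟩
    rintro ⟨j, y⟩ hv
    rcases lt_trichotomy j k with hjk | rfl | hkj
    · rw [srel_lt hjk] at hv
      exact sh_bot_fiber_empty hsh hjk hm hv
    · rw [srel_same] at hv
      exact absurd (hm y) (not_le_of_gt hv)
    · rw [srel_gt hkj] at hv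
      apply hv
      obtain ⟨x, hx⟩ := sh_bot_fiber_nonempty hsh hkj hm y
      exact sh_down hsh hkj hx (hm x)

include hsh in
theorem srel_colors (hpair : ∃ i0 j0 : ι, i0 < j0) (k : ι) : Nonempty (A k) := by
  obtain ⟨i0, j0, hij0⟩ := hpair
  rcases lt_trichotomy k j0 with h | rfl | h
  · obtain ⟨a, b, hS⟩ := (hsh k j0 h).1
    exact ⟨a⟩
  · obtain ⟨a, b, hS⟩ := (hsh i0 k hij0).1
    exact ⟨b⟩
  · obtain ⟨a, b, hS⟩ := (hsh j0 k h).1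
    exact ⟨b⟩

end Shuffle

theorem orderIso_top_iff {α β : Type*} [LinearOrder α] [LinearOrder β] (e : α ≃o β) :
    (∃ M : α, ∀ z, z ≤ M) ↔ (∃ M : β, ∀ z, z ≤ M) := by
  constructor
  · rintro ⟨M, hM⟩
    refine ⟨e M, fun z => ?_⟩
    have := e.le_iff_le.2 (hM (e.symm z))
    rwa [e.apply_symm_apply] at this
  · rintro ⟨M, hM⟩
    refine ⟨e.symm M, fun z => ?_⟩
    have := e.symm.le_iff_le.2 (hM (e z))
    rwa [e.symm_apply_apply] at this

theorem orderIso_bot_iff {α β : Type*} [LinearOrder α] [LinearOrder β] (e : α ≃o β) :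
    (∃ m : α, ∀ z, m ≤ z) ↔ (∃ m : β, ∀ z, m ≤ z) := by
  constructor
  · rintro ⟨m, hm⟩
    refine ⟨e m, fun z => ?_⟩
    have := e.le_iff_le.2 (hm (e.symm z))
    rwa [e.apply_symm_apply] at this
  · rintro ⟨m, hm⟩
    refine ⟨e.symm m, fun z => ?_⟩
    have := e.symm.le_iff_le.2 (hm (e z))
    rwa [e.symm_apply_apply] at this

theorem stmt_14 {ι : Type*} [LinearOrder ι] [Countable ι]
    (A B : ι → Type*) [∀ i, LinearOrder (A i)] [∀ i, LinearOrder (B i)]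
    [∀ i, Countable (A i)] [∀ i, Countable (B i)]
    (SA : ∀ i j : ι, A i → A j → Prop) (SB : ∀ i j : ι, B i → B j → Prop)
    (hshA : ∀ i j : ι, i < j → IsShuffling (SA i j))
    (hshB : ∀ i j : ι, i < j → IsShuffling (SB i j))
    (hcohA : ∀ i j k : ι, i < j → j < k → ∀ (a : A i) (c : A k),
      SA i k a c ↔ ∃ b : A j, SA i j a b ∧ SA j k b c)
    (hcohB : ∀ i j k : ι, i < j → j < k → ∀ (a : B i) (c : B k),
      SB i k a c ↔ ∃ b : B j, SB i j a b ∧ SB j k b c)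
    (hiso : ∀ i : ι, Nonempty (A i ≃o B i)) :
    ∃ f : ∀ i : ι, A i ≃o B i, ∀ i j : ι, i < j → ∀ (x : A i) (y : A j),
      SA i j x y ↔ SB i j (f i x) (f j y) := by
  classical
  by_cases hpair : ∃ i0 j0 : ι, i0 < j0
  · obtain ⟨F, hFbij, hFord, hFcol⟩ :=
      bf_main (R := srel SA) (T := srel SB) (c := Sigma.fst) (d := Sigma.fst)
        (srel_total)
        (srel_irrefl)
        (fun h1 h2 => srel_trans hshA hcohA h1 h2)
        (srel_total)
        (srel_irrefl)
        (fun h1 h2 => srel_trans hshB hcohB h1 h2)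
        (srel_dense hshA hcohA hpair)
        (srel_dense hshB hcohB hpair)
        (fun k => let ⟨a⟩ := srel_colors hshA hpair k; ⟨⟨k, a⟩, rfl⟩)
        (fun k => let ⟨b⟩ := srel_colors hshB hpair k; ⟨⟨k, b⟩, rfl⟩)
        (fun k => by
          rw [srel_top_iff hshA k, srel_top_iff hshB k]
          constructor
          · rintro ⟨h1, h2⟩
            refine ⟨(orderIso_top_iff (hiso k).some).1 h1, fun j hjk hj => ?_⟩
            exact h2 j hjk ((orderIso_top_iff (hiso j).some).2 hj)
          · rintro ⟨h1, h2⟩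
            refine ⟨(orderIso_top_iff (hiso k).some).2 h1, fun j hjk hj => ?_⟩
            exact h2 j hjk ((orderIso_top_iff (hiso j).some).1 hj))
        (fun k => by
          rw [srel_bot_iff hshA k, srel_bot_iff hshB k]
          exact orderIso_bot_iff (hiso k).some)
        (fun k => by
          obtain ⟨i0, j0, hij0⟩ := hpair
          by_cases h0 : i0 = k
          · exact ⟨j0, fun he => absurd hij0 (by rw [h0, he]; exact lt_irrefl k)⟩
          · exact ⟨i0, h0⟩)
    have key : ∀ (i : ι) (x : A i), ∃ y : B i, F ⟨i, x⟩ = ⟨i, y⟩ := by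
      intro i x
      have h := hFcol ⟨i, x⟩
      rcases hF : F ⟨i, x⟩ with ⟨j, y⟩
      rw [hF] at h
      simp only at h
      subst h
      exact ⟨y, rfl⟩
    choose g hg using key
    have hmono : ∀ i, StrictMono (g i) := by
      intro i x x' hxx
      have h2 := (hFord ⟨i, x⟩ ⟨i, x'⟩).1 (srel_same.2 hxx)
      rw [hg, hg] at h2
      exact srel_same.1 h2
    have hsurj : ∀ i, Function.Surjective (g i) := by
      intro i y
      obtain ⟨u, hu⟩ := hFbij.2 ⟨i, y⟩
      obtain ⟨i', x⟩ := u
      have h := hg i' x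
      rw [hu] at h
      obtain ⟨h1, h2⟩ := Sigma.mk.inj_iff.1 h
      subst h1
      exact ⟨x, (eq_of_heq h2).symm⟩
    refine ⟨fun i => StrictMono.orderIsoOfSurjective (g i) (hmono i) (hsurj i), ?_⟩
    intro i j hij x y
    have h0 : SA i j x y ↔ srel SA ⟨i, x⟩ ⟨j, y⟩ := (srel_lt hij).symm
    rw [h0, hFord, hg, hg, srel_lt hij]
    have e1 : (StrictMono.orderIsoOfSurjective (g i) (hmono i) (hsurj i) : A i → B i) = g i :=
      StrictMono.coe_orderIsoOfSurjective _ _ _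
    have e2 : (StrictMono.orderIsoOfSurjective (g j) (hmono j) (hsurj j) : A j → B j) = g j :=
      StrictMono.coe_orderIsoOfSurjective _ _ _
    rw [show (StrictMono.orderIsoOfSurjective (g i) (hmono i) (hsurj i)) x = g i x from
        congrFun e1 x,
      show (StrictMono.orderIsoOfSurjective (g j) (hmono j) (hsurj j)) y = g j y from
        congrFun e2 y]
  · push_neg at hpair
    exact ⟨fun i => (hiso i).some, fun i j hij => absurd hij (not_lt_of_ge (hpair i j))⟩
end

section
/- Let ((A_i,<_i))_{i<α} be a family of countable linear orders shuffled by a coherent family of shuffling relations. Then the possible order types are constrained as follows: all A_i are countable dense linear orders, at most one A_i has a minimum, and at most one A_i has a maximum. In particular each A_i has order type η, 1+η, η+1, or 1+η+1 (the order types of the rationals in (0,1), [0,1), (0,1], [0,1] respectively), with at most one of the A_i having a least element and at most one having a greatest element. -/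
section Shuffle
variable {A B : Type*} [LinearOrder A] [LinearOrder B] {S : A → B → Prop}

lemma shuffle_fiber_no_max (hS : IsShuffling S) {a : A} {b : B} (h : S a b) :
    ∃ a', S a' b ∧ a < a' := by
  by_contra hc
  push_neg at hc
  exact hS.2.2.2.1 b ⟨a, fun x hx => hc x hx, fun u hu => hu h⟩

lemma shuffle_left_nontrivial (hS : IsShuffling S) : ∃ a a' : A, a < a' := by
  obtain ⟨a, b, hab⟩ := hS.1
  obtain ⟨a', _, h⟩ := shuffle_fiber_no_max hS hab
  exact ⟨a, a', h⟩

lemma shuffle_right_nontrivial (hS : IsShuffling S) : ∃ b b' : B, b < b' := by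
  obtain ⟨a, b, hab⟩ := hS.1
  obtain ⟨a', ha'b, haa'⟩ := shuffle_fiber_no_max hS hab
  obtain ⟨y, hy, hny⟩ := Set.exists_of_ssubset (hS.2.2.2.2.2 a a' haa')
  refine ⟨y, b, ?_⟩
  by_contra hyb
  exact hny (hS.2.2.2.2.1 a' b ha'b y (le_of_not_gt hyb))

lemma shuffle_left_dense (hS : IsShuffling S) {a a' : A} (h : a < a') :
    ∃ c, a < c ∧ c < a' := by
  by_contra hc
  push_neg at hc
  obtain ⟨b, hb, hnb⟩ := Set.exists_of_ssubset (hS.2.2.2.2.2 a a' h)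
  refine hS.2.2.2.1 b ⟨a, fun x hx => ?_, fun u hu => hu hb⟩
  by_contra hxa
  exact hnb (hS.2.1 b x hx a' (hc x (lt_of_not_ge hxa)))

lemma shuffle_right_dense (hS : IsShuffling S) {b b' : B} (h : b < b') :
    ∃ c, b < c ∧ c < b' := by
  by_contra hc
  push_neg at hc
  obtain ⟨a, ha, hna⟩ := Set.exists_of_ssubset (hS.2.2.1 b b' h)
  obtain ⟨a'', ha'', haa''⟩ := shuffle_fiber_no_max hS ha
  have hna'' : ¬ S a'' b := fun hx => hna (hS.2.1 b a'' hx a (le_of_lt haa''))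
  have key : ∀ x : A, S x b' → ¬ S x b → {y | S x y} = {y | b' ≤ y} := by
    intro x hx hnx
    ext y
    constructor
    · intro hy
      by_contra hyb'
      have hyb : y ≤ b := by
        rcases le_or_gt y b with h1 | h1
        · exact h1
        · exact absurd (hc y h1) hyb'
      exact hnx (hS.2.2.2.2.1 x y hy b hyb)
    · intro hy
      exact hS.2.2.2.2.1 x b' hx y hy
  have hss := hS.2.2.2.2.2 a a'' haa''
  rw [key a ha hna, key a'' ha'' hna''] at hss
  exact (ssubset_irrefl _) hss

lemma shuffle_not_bot_bot (hS : IsShuffling S) (hA : ∃ m : A, ∀ x, m ≤ x)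
    (hB : ∃ m : B, ∀ y, m ≤ y) : False := by
  obtain ⟨m, hm⟩ := hA
  obtain ⟨m', hm'⟩ := hB
  have hne : ∃ a, S a m' := by
    by_contra hcon
    push_neg at hcon
    exact hS.2.2.2.1 m' ⟨m, fun x hx => absurd hx (hcon x), fun u _ => hm u⟩
  obtain ⟨a, ha⟩ := hne
  have hma : S m m' := hS.2.1 m' a ha m (hm a)
  obtain ⟨a', ha', hma'⟩ := shuffle_fiber_no_max hS hma
  obtain ⟨y, _, hny⟩ := Set.exists_of_ssubset (hS.2.2.2.2.2 m a' hma')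
  exact hny (hS.2.2.2.2.1 a' m' ha' y (hm' y))

lemma shuffle_not_top_top (hS : IsShuffling S) (hA : ∃ M : A, ∀ x, x ≤ M)
    (hB : ∃ M : B, ∀ y, y ≤ M) : False := by
  obtain ⟨M, hM⟩ := hA
  obtain ⟨M', hM'⟩ := hB
  have hRM : ∀ b, ¬ S M b := by
    intro b hb
    exact hS.2.2.2.1 b ⟨M, fun x _ => hM x, fun u hu => hu hb⟩
  have hL : ∀ a, a < M → S a M' := by
    intro a haM
    obtain ⟨y, hy, _⟩ := Set.exists_of_ssubset (hS.2.2.2.2.2 a M haM)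
    exact hS.2.2.2.2.1 a y hy M' (hM' y)
  by_cases hcase : ∃ u, u < M ∧ ∀ a, a < M → a ≤ u
  · obtain ⟨u, huM, hu⟩ := hcase
    refine hS.2.2.2.1 M' ⟨u, fun x hx => ?_, fun v hv => hv (hL u huM)⟩
    exact hu x (lt_of_le_of_ne (hM x) (fun hxM => hRM M' (hxM ▸ hx)))
  · push_neg at hcase
    refine hS.2.2.2.1 M' ⟨M, fun x _ => hM x, fun v hv => ?_⟩
    by_contra hMv
    obtain ⟨a, haM, hva⟩ := hcase v (lt_of_not_ge hMv)
    exact absurd (hv (hL a haM)) (not_le.mpr hva)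

end Shuffle

section Classify
variable (α : Type*) [LinearOrder α] [Countable α] [DenselyOrdered α]

lemma isoIoo [NoMinOrder α] [NoMaxOrder α] [Nonempty α] :
    Nonempty (α ≃o Set.Ioo (0:ℚ) 1) :=
  haveI : Nonempty (Set.Ioo (0:ℚ) 1) := ⟨⟨1/2, by norm_num⟩⟩
  Order.iso_of_countable_dense α _

lemma isoIoc [NoMinOrder α] (a1 : α) (ha1 : ∀ x, x ≤ a1) (hnt : ∃ x, x < a1) :
    Nonempty (α ≃o Set.Ioc (0:ℚ) 1) := by
  haveI : DenselyOrdered {x : α // x < a1} := ⟨fun x y h => by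
    obtain ⟨c, hc1, hc2⟩ := exists_between (show x.1 < y.1 from h)
    exact ⟨⟨c, hc2.trans y.2⟩, hc1, hc2⟩⟩
  haveI : NoMinOrder {x : α // x < a1} := ⟨fun x => by
    obtain ⟨c, hc⟩ := exists_lt x.1
    exact ⟨⟨c, hc.trans x.2⟩, hc⟩⟩
  haveI : NoMaxOrder {x : α // x < a1} := ⟨fun x => by
    obtain ⟨c, hc1, hc2⟩ := exists_between x.2
    exact ⟨⟨c, hc2⟩, hc1⟩⟩
  haveI : Nonempty {x : α // x < a1} := ⟨⟨hnt.choose, hnt.choose_spec⟩⟩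
  obtain ⟨e⟩ := isoIoo {x : α // x < a1}
  set f : α → Set.Ioc (0:ℚ) 1 := fun x =>
    if h : x < a1 then
      ⟨(e ⟨x, h⟩ : ℚ), (e ⟨x, h⟩).2.1, le_of_lt (e ⟨x, h⟩).2.2⟩
    else ⟨1, by norm_num, le_refl 1⟩ with hf
  have hmono : StrictMono f := by
    intro x y hxy
    by_cases hy : y < a1
    · have hx : x < a1 := hxy.trans hy
      simp only [hf, dif_pos hx, dif_pos hy, Subtype.mk_lt_mk]
      exact Subtype.coe_lt_coe.mpr (e.strictMono (show (⟨x, hx⟩ : {x : α // x < a1}) < ⟨y, hy⟩ from hxy))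
    · have hy' : y = a1 := le_antisymm (ha1 y) (le_of_not_gt hy)
      have hx : x < a1 := hy' ▸ hxy
      simp only [hf, dif_pos hx, dif_neg hy, Subtype.mk_lt_mk]
      exact (e ⟨x, hx⟩).2.2
  have hsurj : Function.Surjective f := by
    rintro ⟨q, hq0, hq1⟩
    rcases eq_or_lt_of_le hq1 with h1 | h1
    · refine ⟨a1, ?_⟩
      simp only [hf, dif_neg (lt_irrefl a1)]
      exact Subtype.ext h1.symm
    · set x := e.symm ⟨q, hq0, h1⟩ with hx
      refine ⟨x.1, ?_⟩
      simp only [hf, dif_pos x.2]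
      refine Subtype.ext ?_
      show ((e ⟨x.1, x.2⟩ : Set.Ioo (0:ℚ) 1) : ℚ) = q
      rw [show (⟨x.1, x.2⟩ : {x : α // x < a1}) = x from rfl, hx, e.apply_symm_apply]
  exact ⟨StrictMono.orderIsoOfSurjective f hmono hsurj⟩

lemma isoIco [NoMaxOrder α] (a0 : α) (ha0 : ∀ x, a0 ≤ x) (hnt : ∃ x, a0 < x) :
    Nonempty (α ≃o Set.Ico (0:ℚ) 1) := by
  haveI : DenselyOrdered {x : α // a0 < x} := ⟨fun x y h => by
    obtain ⟨c, hc1, hc2⟩ := exists_between (show x.1 < y.1 from h)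
    exact ⟨⟨c, x.2.trans hc1⟩, hc1, hc2⟩⟩
  haveI : NoMaxOrder {x : α // a0 < x} := ⟨fun x => by
    obtain ⟨c, hc⟩ := exists_gt x.1
    exact ⟨⟨c, x.2.trans hc⟩, hc⟩⟩
  haveI : NoMinOrder {x : α // a0 < x} := ⟨fun x => by
    obtain ⟨c, hc1, hc2⟩ := exists_between x.2
    exact ⟨⟨c, hc1⟩, hc2⟩⟩
  haveI : Nonempty {x : α // a0 < x} := ⟨⟨hnt.choose, hnt.choose_spec⟩⟩
  obtain ⟨e⟩ := isoIoo {x : α // a0 < x}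
  set f : α → Set.Ico (0:ℚ) 1 := fun x =>
    if h : a0 < x then
      ⟨(e ⟨x, h⟩ : ℚ), le_of_lt (e ⟨x, h⟩).2.1, (e ⟨x, h⟩).2.2⟩
    else ⟨0, le_refl 0, by norm_num⟩ with hf
  have hmono : StrictMono f := by
    intro x y hxy
    by_cases hx : a0 < x
    · have hy : a0 < y := hx.trans hxy
      simp only [hf, dif_pos hx, dif_pos hy, Subtype.mk_lt_mk]
      exact Subtype.coe_lt_coe.mpr (e.strictMono (show (⟨x, hx⟩ : {x : α // a0 < x}) < ⟨y, hy⟩ from hxy))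
    · have hx' : x = a0 := le_antisymm (le_of_not_gt hx) (ha0 x)
      have hy : a0 < y := hx' ▸ hxy
      simp only [hf, dif_pos hy, dif_neg hx, Subtype.mk_lt_mk]
      exact (e ⟨y, hy⟩).2.1
  have hsurj : Function.Surjective f := by
    rintro ⟨q, hq0, hq1⟩
    rcases eq_or_lt_of_le hq0 with h0 | h0
    · refine ⟨a0, ?_⟩
      simp only [hf, dif_neg (lt_irrefl a0)]
      exact Subtype.ext h0
    · set x := e.symm ⟨q, h0, hq1⟩ with hx
      refine ⟨x.1, ?_⟩
      simp only [hf, dif_pos x.2]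
      refine Subtype.ext ?_
      show ((e ⟨x.1, x.2⟩ : Set.Ioo (0:ℚ) 1) : ℚ) = q
      rw [show (⟨x.1, x.2⟩ : {x : α // a0 < x}) = x from rfl, hx, e.apply_symm_apply]
  exact ⟨StrictMono.orderIsoOfSurjective f hmono hsurj⟩

lemma isoIcc (a0 a1 : α) (h0 : ∀ x, a0 ≤ x) (h1 : ∀ x, x ≤ a1) (h01 : a0 < a1) :
    Nonempty (α ≃o Set.Icc (0:ℚ) 1) := by
  haveI : DenselyOrdered {x : α // a0 < x} := ⟨fun x y h => by
    obtain ⟨c, hc1, hc2⟩ := exists_between (show x.1 < y.1 from h)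
    exact ⟨⟨c, x.2.trans hc1⟩, hc1, hc2⟩⟩
  haveI : NoMinOrder {x : α // a0 < x} := ⟨fun x => by
    obtain ⟨c, hc1, hc2⟩ := exists_between x.2
    exact ⟨⟨c, hc1⟩, hc2⟩⟩
  obtain ⟨c, hc1, hc2⟩ := exists_between h01
  obtain ⟨e⟩ := isoIoc {x : α // a0 < x} ⟨a1, h01⟩
    (fun x => Subtype.mk_le_mk.mpr (h1 x.1)) ⟨⟨c, hc1⟩, Subtype.mk_lt_mk.mpr hc2⟩
  set f : α → Set.Icc (0:ℚ) 1 := fun x =>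
    if h : a0 < x then
      ⟨(e ⟨x, h⟩ : ℚ), le_of_lt (e ⟨x, h⟩).2.1, (e ⟨x, h⟩).2.2⟩
    else ⟨0, le_refl 0, by norm_num⟩ with hf
  have hmono : StrictMono f := by
    intro x y hxy
    by_cases hx : a0 < x
    · have hy : a0 < y := hx.trans hxy
      simp only [hf, dif_pos hx, dif_pos hy, Subtype.mk_lt_mk]
      exact Subtype.coe_lt_coe.mpr (e.strictMono (show (⟨x, hx⟩ : {x : α // a0 < x}) < ⟨y, hy⟩ from hxy))
    · have hx' : x = a0 := le_antisymm (le_of_not_gt hx) (h0 x)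
      have hy : a0 < y := hx' ▸ hxy
      simp only [hf, dif_pos hy, dif_neg hx, Subtype.mk_lt_mk]
      exact (e ⟨y, hy⟩).2.1
  have hsurj : Function.Surjective f := by
    rintro ⟨q, hq0, hq1⟩
    rcases eq_or_lt_of_le hq0 with h0' | h0'
    · refine ⟨a0, ?_⟩
      simp only [hf, dif_neg (lt_irrefl a0)]
      exact Subtype.ext h0'
    · set x := e.symm ⟨q, h0', hq1⟩ with hx
      refine ⟨x.1, ?_⟩
      simp only [hf, dif_pos x.2]
      refine Subtype.ext ?_
      show ((e ⟨x.1, x.2⟩ : Set.Ioc (0:ℚ) 1) : ℚ) = q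
      rw [show (⟨x.1, x.2⟩ : {x : α // a0 < x}) = x from rfl, hx, e.apply_symm_apply]
  exact ⟨StrictMono.orderIsoOfSurjective f hmono hsurj⟩

end Classify

theorem stmt_15 {ι : Type*} [LinearOrder ι]
    (A : ι → Type*) [∀ i, LinearOrder (A i)] [∀ i, Countable (A i)]
    (S : ∀ i j : ι, A i → A j → Prop)
    (hsh : ∀ i j : ι, i < j → IsShuffling (S i j))
    (hcoh : ∀ i j k : ι, i < j → j < k → ∀ (a : A i) (c : A k),
      S i k a c ↔ ∃ b : A j, S i j a b ∧ S j k b c)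
    (hι : ∃ i j : ι, i ≠ j) :
    -- each A_i is a (countable) dense linear order
    (∀ i : ι, ∀ a b : A i, a < b → ∃ c : A i, a < c ∧ c < b) ∧
    -- at most one of the A_i has a minimum
    (∀ i j : ι, (∃ x : A i, ∀ y : A i, x ≤ y) → (∃ x : A j, ∀ y : A j, x ≤ y) → i = j) ∧
    -- at most one of the A_i has a maximum
    (∀ i j : ι, (∃ x : A i, ∀ y : A i, y ≤ x) → (∃ x : A j, ∀ y : A j, y ≤ x) → i = j) ∧
    -- each A_i has order type η, 1+η, η+1 or 1+η+1
    (∀ i : ι,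
      Nonempty (A i ≃o (Set.Ioo (0 : ℚ) 1)) ∨ Nonempty (A i ≃o (Set.Ico (0 : ℚ) 1)) ∨
      Nonempty (A i ≃o (Set.Ioc (0 : ℚ) 1)) ∨ Nonempty (A i ≃o (Set.Icc (0 : ℚ) 1))) := by
  have hpartner : ∀ i : ι, ∃ j, j ≠ i := by
    obtain ⟨i0, j0, h⟩ := hι
    intro i
    by_cases h' : i = i0
    · exact ⟨j0, fun e => h (h' ▸ e.symm)⟩
    · exact ⟨i0, fun e => h' e.symm⟩
  have hdense : ∀ i : ι, ∀ a b : A i, a < b → ∃ c : A i, a < c ∧ c < b := by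
    intro i a b hab
    obtain ⟨j, hj⟩ := hpartner i
    rcases hj.lt_or_gt with h | h
    · exact shuffle_right_dense (hsh j i h) hab
    · exact shuffle_left_dense (hsh i j h) hab
  refine ⟨hdense, ?_, ?_, ?_⟩
  · intro i j hi hj
    by_contra hne
    rcases (Ne.lt_or_gt hne) with h | h
    · exact shuffle_not_bot_bot (hsh i j h) hi hj
    · exact shuffle_not_bot_bot (hsh j i h) hj hi
  · intro i j hi hj
    by_contra hne
    rcases (Ne.lt_or_gt hne) with h | h
    · exact shuffle_not_top_top (hsh i j h) hi hj
    · exact shuffle_not_top_top (hsh j i h) hj hi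
  · intro i
    obtain ⟨j, hj⟩ := hpartner i
    have hnt : ∃ a a' : A i, a < a' := by
      rcases hj.lt_or_gt with h | h
      · exact shuffle_right_nontrivial (hsh j i h)
      · exact shuffle_left_nontrivial (hsh i j h)
    haveI : DenselyOrdered (A i) := ⟨fun a b h => hdense i a b h⟩
    obtain ⟨a, a', haa'⟩ := hnt
    by_cases hbot : ∃ x : A i, ∀ y, x ≤ y <;> by_cases htop : ∃ x : A i, ∀ y, y ≤ x
    · -- both endpoints
      obtain ⟨a0, h0⟩ := hbot
      obtain ⟨a1, h1⟩ := htop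
      have h01 : a0 < a1 := by
        rcases lt_or_eq_of_le (h0 a1) with h | h
        · exact h
        · exact absurd (lt_of_lt_of_le haa' (h ▸ h1 a')) (not_lt.mpr (h0 a))
      exact Or.inr (Or.inr (Or.inr (isoIcc (A i) a0 a1 h0 h1 h01)))
    · -- bot only
      push_neg at htop
      haveI : NoMaxOrder (A i) := ⟨fun x => htop x⟩
      obtain ⟨a0, h0⟩ := hbot
      exact Or.inr (Or.inl (isoIco (A i) a0 h0 ⟨a', lt_of_le_of_lt (h0 a) haa'⟩))
    · -- top only
      push_neg at hbot
      haveI : NoMinOrder (A i) := ⟨fun x => hbot x⟩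
      obtain ⟨a1, h1⟩ := htop
      exact Or.inr (Or.inr (Or.inl (isoIoc (A i) a1 h1 ⟨a, lt_of_lt_of_le haa' (h1 a')⟩)))
    · -- no endpoints
      push_neg at htop hbot
      haveI : NoMaxOrder (A i) := ⟨fun x => htop x⟩
      haveI : NoMinOrder (A i) := ⟨fun x => hbot x⟩
      haveI : Nonempty (A i) := ⟨a⟩
      exact Or.inl (isoIoo (A i))
end

section
/- The restriction of the real ordering to ℚ × (ℝ \ ℚ), i.e., the relation S = {(q,r) ∈ ℚ × (ℝ \ ℚ) | q < r}, is a shuffling relation between the linear orders (ℚ,<) and (ℝ \ ℚ,<). -/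
theorem stmt_16 :
    IsShuffling (fun (q : ℚ) (r : {x : ℝ // Irrational x}) => (q : ℝ) < (r : ℝ)) := by
  refine ⟨⟨0, ⟨Real.sqrt 2, irrational_sqrt_two⟩, by
      simpa using Real.sqrt_pos.2 (by norm_num : (2:ℝ) > 0)⟩, ?_, ?_, ?_, ?_, ?_⟩
  · intro b x hx y hy
    exact lt_of_le_of_lt (by exact_mod_cast hy) hx
  · intro b b' hbb'
    have h : (b : ℝ) < (b' : ℝ) := hbb'
    obtain ⟨q, hq1, hq2⟩ := exists_rat_btwn h
    refine ⟨fun x hx => lt_trans hx h, fun hsub => ?_⟩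
    exact absurd (hsub hq2) (not_lt.2 hq1.le)
  · rintro b ⟨a, ha⟩
    rcases lt_or_gt_of_ne (b.2.ne_rat a).symm with h | h
    · -- a < b
      obtain ⟨q, hq1, hq2⟩ := exists_rat_btwn h
      have : q ≤ a := ha.1 hq2
      exact absurd hq1 (not_lt.2 (by exact_mod_cast this))
    · -- b < a
      obtain ⟨q, hq1, hq2⟩ := exists_rat_btwn h
      have : a ≤ q := ha.2 fun x hx => by
        have : (x : ℝ) < (q : ℝ) := lt_trans hx hq1
        exact_mod_cast this.le
      exact absurd hq2 (not_lt.2 (by exact_mod_cast this))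
  · intro a y hy y' hyy'
    exact lt_of_lt_of_le hy hyy'
  · intro a a' haa'
    have h : (a : ℝ) < (a' : ℝ) := by exact_mod_cast haa'
    obtain ⟨r, hr, hr1, hr2⟩ := exists_irrational_btwn h
    refine ⟨fun y hy => lt_trans h hy, fun hsub => ?_⟩
    exact absurd (hsub (show (a:ℝ) < ((⟨r, hr⟩ : {x : ℝ // Irrational x}):ℝ) from hr1))
      (not_lt.2 hr2.le)
end

section
/- Let (D,<) be a dense complete linear order and let A, B ⊆ D be disjoint subsets each of which is topologically dense in D (between any two distinct elements of D there is an element of A and an element of B). Then the relation S = {(a,b) ∈ A × B | a < b} is a shuffling relation between the induced orders (A,<) and (B,<). -/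
theorem stmt_17 {D : Type*} [LinearOrder D] [DenselyOrdered D] [Nontrivial D]
    (hsup : ∀ s : Set D, s.Nonempty → BddAbove s → ∃ x : D, IsLUB s x)
    (hinf : ∀ s : Set D, s.Nonempty → BddBelow s → ∃ x : D, IsGLB s x)
    (A B : Set D) (hdisj : Disjoint A B)
    (hA : ∀ c d : D, c < d → ∃ a ∈ A, c < a ∧ a < d)
    (hB : ∀ c d : D, c < d → ∃ b ∈ B, c < b ∧ b < d) :
    IsShuffling (fun (a : A) (b : B) => (a : D) < (b : D)) := by
  refine ⟨?_, ?_, ?_, ?_, ?_, ?_⟩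
  · -- nonempty
    obtain ⟨x, y, hxy⟩ := exists_pair_ne D
    have key : ∀ x y : D, x < y → ∃ (a : A) (b : B), (a : D) < (b : D) := by
      intro x y h
      obtain ⟨a, ha, hxa, hay⟩ := hA x y h
      obtain ⟨b, hb, hab, _⟩ := hB a y hay
      exact ⟨⟨a, ha⟩, ⟨b, hb⟩, hab⟩
    rcases hxy.lt_or_gt with h | h
    · exact key x y h
    · exact key y x h
  · -- initial segments
    intro b x hx y hyx
    exact lt_of_le_of_lt hyx hx
  · -- strictly increasing in b
    intro b b' hbb'
    constructor
    · intro x hx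
      exact hx.trans hbb'
    · intro hsub
      obtain ⟨a, ha, h1, h2⟩ := hA (b : D) (b' : D) hbb'
      have := hsub (show (⟨a, ha⟩ : A) ∈ {x : A | (x : D) < (b' : D)} from h2)
      exact absurd this (not_lt.2 h1.le)
  · -- no supremum
    rintro b ⟨⟨a, haA⟩, ha⟩
    rcases lt_or_ge a (b : D) with h | h
    · obtain ⟨a', ha', h1, h2⟩ := hA a b h
      have hle := ha.1 (show (⟨a', ha'⟩ : A) ∈ {x : A | (x : D) < (b : D)} from h2)
      exact absurd (Subtype.coe_le_coe.2 hle) (not_le.2 h1)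
    · have hne : (b : D) ≠ a := fun he => hdisj.le_bot ⟨he ▸ haA, b.2⟩
      have hba : (b : D) < a := lt_of_le_of_ne h hne
      obtain ⟨a', ha', h1, h2⟩ := hA b a hba
      have hub : (⟨a', ha'⟩ : A) ∈ upperBounds {x : A | (x : D) < (b : D)} := by
        intro x hx
        exact Subtype.coe_le_coe.1 (le_of_lt (hx.trans h1))
      have := ha.2 hub
      exact absurd h2 (not_lt.2 (Subtype.coe_le_coe.2 this))
  · -- final segments
    intro a y hy y' hyy'
    exact hy.trans_le hyy'
  · -- strictly decreasing in a
    intro a a' haa'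
    constructor
    · intro y hy
      exact (Subtype.coe_lt_coe.2 haa').trans hy
    · intro hsub
      obtain ⟨b, hb, h1, h2⟩ := hB (a : D) (a' : D) haa'
      have := hsub (show (⟨b, hb⟩ : B) ∈ {y : B | (a : D) < (y : D)} from h1)
      exact absurd this (not_lt.2 h2.le)
end
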